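/- arXiv:math/0510051 — 11 statements merged into one kernel-verified Lean document; each statement's English description precedes it below -/
import Mathlib

section
/- Every track layout of the graph K_n' (the 1-subdivision of the complete graph K_n) uses at least (n/2)^{2/3} tracks. -/
/-- The 1-subdivision `K_n'` of the complete graph `K_n`: original vertices
`Fin n` together with one division vertex for each edge of `K_n`. -/
def KnSub (n : ℕ) : SimpleGraph (Fin n ⊕ {e : Sym2 (Fin n) // ¬ e.IsDiag}) where
  Adj a b :=
    (∃ i e, a = Sum.inl i ∧ b = Sum.inr e ∧ i ∈ e.1) ∨
    (∃ i e, b = Sum.inl i ∧ a = Sum.inr e ∧ i ∈ e.1)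
  symm := by
    constructor
    intro a b h
    rcases h with h | h
    · exact Or.inr h
    · exact Or.inl h
  loopless := by
    constructor
    rintro a (⟨i, e, h1, h2, _⟩ | ⟨i, e, h1, h2, _⟩) <;> simp_all

lemma KnSub_adj_inr_inl {n : ℕ} (e : {e : Sym2 (Fin n) // ¬ e.IsDiag}) (i : Fin n)
    (hi : i ∈ e.1) : (KnSub n).Adj (Sum.inr e) (Sum.inl i) :=
  Or.inr ⟨i, e, rfl, rfl, hi⟩

/-- Key combinatorial lemma: for any track `c`, if `m` is the number of original
vertices on track `c`, then `m ^ 2 ≤ 4 * t`. -/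
lemma KnSub_track_fiber_sq_le (n t : ℕ)
    (f : (Fin n ⊕ {e : Sym2 (Fin n) // ¬ e.IsDiag}) → Fin t)
    (g : (Fin n ⊕ {e : Sym2 (Fin n) // ¬ e.IsDiag}) → ℕ)
    (hproper : ∀ v w, (KnSub n).Adj v w → f v ≠ f w)
    (hinj : ∀ v w, v ≠ w → f v = f w → g v ≠ g w)
    (hX : ∀ v w x y, (KnSub n).Adj v w → (KnSub n).Adj x y →
      f v = f x → f w = f y → ¬ (g v < g x ∧ g y < g w))
    (c : Fin t) :
    (Finset.univ.filter fun i : Fin n => f (Sum.inl i) = c).card ^ 2 ≤ 4 * t := by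
  classical
  have ht : 0 < t := c.pos
  set S : Finset (Fin n) := Finset.univ.filter fun i : Fin n => f (Sum.inl i) = c with hSdef
  set m : ℕ := S.card with hm
  have hfS : ∀ i ∈ S, f (Sum.inl i) = c := by
    intro i hi
    exact (Finset.mem_filter.mp hi).2
  rcases le_or_gt m 1 with hm1 | hm1
  · calc m ^ 2 ≤ 1 ^ 2 := Nat.pow_le_pow_left hm1 2
      _ ≤ 4 * t := by omega
  -- m ≥ 2
  set key : Fin n → ℕ := fun i => g (Sum.inl i) with hkey
  have hinjS : Set.InjOn key ↑S := by
    intro i hi j hj hij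
    by_contra hne
    exact hinj (Sum.inl i) (Sum.inl j) (by simp [hne])
      ((hfS i hi).trans (hfS j hj).symm) hij
  set T : Finset ℕ := S.image key with hT
  have hTcard : T.card = m := Finset.card_image_of_injOn hinjS
  set ι : Fin m ≃o {x // x ∈ T} := T.orderIsoOfFin hTcard with hι
  have hex : ∀ j : Fin m, ∃ i, i ∈ S ∧ key i = (ι j : ℕ) := by
    intro j
    have : (ι j : ℕ) ∈ T := (ι j).2
    rcases Finset.mem_image.mp this with ⟨i, hi, hki⟩
    exact ⟨i, hi, hki⟩
  set u : Fin m → Fin n := fun j => (hex j).choose with hu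
  have huS : ∀ j, u j ∈ S := fun j => (hex j).choose_spec.1
  have huk : ∀ j, key (u j) = (ι j : ℕ) := fun j => (hex j).choose_spec.2
  have humono : ∀ {j j' : Fin m}, j < j' → key (u j) < key (u j') := by
    intro j j' hjj
    rw [huk, huk]
    exact_mod_cast ι.lt_iff_lt.mpr hjj
  have huinj : Function.Injective u := by
    intro j j' hjj
    by_contra hne
    rcases lt_or_gt_of_ne hne with h | h
    · exact absurd (congrArg key hjj) (Nat.ne_of_lt (humono h))
    · exact absurd (congrArg key hjj) (Nat.ne_of_gt (humono h))
  set h₀ : ℕ := m / 2 with hh₀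
  have hh₀m : h₀ < m := Nat.div_lt_self (by omega) (by norm_num)
  set ι₁ : Fin h₀ → Fin m := fun a => ⟨a.val, lt_of_lt_of_le a.isLt (Nat.div_le_self m 2)⟩ with hι₁
  set ι₂ : Fin (m - h₀) → Fin m := fun b => ⟨h₀ + b.val, by have := b.isLt; omega⟩ with hι₂
  have hlt : ∀ (a : Fin h₀) (b : Fin (m - h₀)), ι₁ a < ι₂ b := by
    intro a b
    have := a.isLt
    simp only [hι₁, hι₂, Fin.mk_lt_mk]
    omega
  have hdiag : ∀ p : Fin h₀ × Fin (m - h₀), ¬ (s(u (ι₁ p.1), u (ι₂ p.2))).IsDiag := by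
    intro p
    rw [Sym2.mk_isDiag_iff]
    intro h
    exact absurd (congrArg key h) (Nat.ne_of_lt (humono (hlt p.1 p.2)))
  have hcard : h₀ * (m - h₀) ≤ t - 1 := by
    have hmaps : ∀ p ∈ (Finset.univ : Finset (Fin h₀ × Fin (m - h₀))),
        f (Sum.inr ⟨s(u (ι₁ p.1), u (ι₂ p.2)), hdiag p⟩) ∈ Finset.univ.erase c := by
      intro p _
      refine Finset.mem_erase.mpr ⟨?_, Finset.mem_univ _⟩
      have hadj := KnSub_adj_inr_inl ⟨s(u (ι₁ p.1), u (ι₂ p.2)), hdiag p⟩ (u (ι₁ p.1))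
        (Sym2.mem_mk_left _ _)
      have := hproper _ _ hadj
      rw [hfS _ (huS (ι₁ p.1))] at this
      exact this
    have hinj' : Set.InjOn
        (fun p : Fin h₀ × Fin (m - h₀) => f (Sum.inr ⟨s(u (ι₁ p.1), u (ι₂ p.2)), hdiag p⟩))
        ↑(Finset.univ : Finset (Fin h₀ × Fin (m - h₀))) := by
      intro p _ q _ hpq
      simp only at hpq
      by_cases hd : (⟨s(u (ι₁ p.1), u (ι₂ p.2)), hdiag p⟩ :
          {e : Sym2 (Fin n) // ¬ e.IsDiag}) = ⟨s(u (ι₁ q.1), u (ι₂ q.2)), hdiag q⟩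
      · have hsym : s(u (ι₁ p.1), u (ι₂ p.2)) = s(u (ι₁ q.1), u (ι₂ q.2)) :=
          congrArg Subtype.val hd
        rcases Sym2.eq_iff.mp hsym with ⟨h1, h2⟩ | ⟨h1, h2⟩
        · have e1 : ι₁ p.1 = ι₁ q.1 := huinj h1
          have e2 : ι₂ p.2 = ι₂ q.2 := huinj h2
          have : p.1 = q.1 := by
            have := congrArg Fin.val e1
            simp only [hι₁] at this
            exact Fin.ext this
          have : p.2 = q.2 := by
            have := congrArg Fin.val e2
            simp only [hι₂] at this
            exact Fin.ext (by omega)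
          exact Prod.ext ‹p.1 = q.1› this
        · exfalso
          have e1 : ι₁ p.1 = ι₂ q.2 := huinj h1
          have := congrArg Fin.val e1
          simp only [hι₁, hι₂] at this
          have := p.1.isLt
          omega
      · exfalso
        have hne : (Sum.inr ⟨s(u (ι₁ p.1), u (ι₂ p.2)), hdiag p⟩ :
            Fin n ⊕ {e : Sym2 (Fin n) // ¬ e.IsDiag}) ≠ Sum.inr ⟨s(u (ι₁ q.1), u (ι₂ q.2)), hdiag q⟩ := by
          simp only [ne_eq, Sum.inr.injEq]
          exact hd
        have hgne := hinj _ _ hne hpq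
        rcases lt_or_gt_of_ne hgne with hlt' | hlt'
        · refine hX (Sum.inr ⟨s(u (ι₁ p.1), u (ι₂ p.2)), hdiag p⟩) (Sum.inl (u (ι₂ p.2)))
            (Sum.inr ⟨s(u (ι₁ q.1), u (ι₂ q.2)), hdiag q⟩) (Sum.inl (u (ι₁ q.1)))
            (KnSub_adj_inr_inl _ _ (Sym2.mem_mk_right _ _))
            (KnSub_adj_inr_inl _ _ (Sym2.mem_mk_left _ _))
            hpq ?_ ⟨hlt', ?_⟩
          · rw [hfS _ (huS (ι₂ p.2)), hfS _ (huS (ι₁ q.1))]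
          · exact humono (hlt q.1 p.2)
        · refine hX (Sum.inr ⟨s(u (ι₁ q.1), u (ι₂ q.2)), hdiag q⟩) (Sum.inl (u (ι₂ q.2)))
            (Sum.inr ⟨s(u (ι₁ p.1), u (ι₂ p.2)), hdiag p⟩) (Sum.inl (u (ι₁ p.1)))
            (KnSub_adj_inr_inl _ _ (Sym2.mem_mk_right _ _))
            (KnSub_adj_inr_inl _ _ (Sym2.mem_mk_left _ _))
            hpq.symm ?_ ⟨hlt', ?_⟩
          · rw [hfS _ (huS (ι₂ q.2)), hfS _ (huS (ι₁ p.1))]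
          · exact humono (hlt p.1 q.2)
    have := Finset.card_le_card_of_injOn _ hmaps hinj'
    simpa [Finset.card_erase_of_mem] using this
  -- arithmetic: from h₀ * (m - h₀) ≤ t - 1 deduce m ^ 2 ≤ 4 * t
  have hlt' : h₀ * (m - h₀) < t := lt_of_le_of_lt hcard (Nat.sub_lt ht one_pos)
  rcases Nat.even_or_odd m with ⟨k, hk⟩ | ⟨k, hk⟩
  · have h1 : h₀ = k := by omega
    have h2 : m - h₀ = k := by omega
    rw [h2, h1] at hlt'
    nlinarith
  · have h1 : h₀ = k := by omega
    have h2 : m - h₀ = k + 1 := by omega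
    rw [h2, h1] at hlt'
    nlinarith

/-- Every track layout of `K_n'` uses at least `(n/2)^(2/3)` tracks. -/
theorem KnSub_track_lower_bound (n t : ℕ)
    (f : (Fin n ⊕ {e : Sym2 (Fin n) // ¬ e.IsDiag}) → Fin t)
    (g : (Fin n ⊕ {e : Sym2 (Fin n) // ¬ e.IsDiag}) → ℕ)
    (hproper : ∀ v w, (KnSub n).Adj v w → f v ≠ f w)
    (hinj : ∀ v w, v ≠ w → f v = f w → g v ≠ g w)
    (hX : ∀ v w x y, (KnSub n).Adj v w → (KnSub n).Adj x y →
      f v = f x → f w = f y → ¬ (g v < g x ∧ g y < g w)) :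
    ((n : ℝ) / 2) ^ ((2 : ℝ)/3) ≤ (t : ℝ) := by
  classical
  have hmain : n ^ 2 ≤ 4 * t ^ 3 := by
    rcases Nat.eq_zero_or_pos n with hn | hn
    · simp [hn]
    have ht : 0 < t := (f (Sum.inl ⟨0, hn⟩)).pos
    obtain ⟨c₀, -, hc₀⟩ := Finset.exists_max_image Finset.univ
      (fun c : Fin t => (Finset.univ.filter fun i : Fin n => f (Sum.inl i) = c).card)
      ⟨⟨0, ht⟩, Finset.mem_univ _⟩
    set m := (Finset.univ.filter fun i : Fin n => f (Sum.inl i) = c₀).card with hm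
    have hsum : n ≤ t * m := by
      have h1 : (Finset.univ : Finset (Fin n)).card =
          ∑ c : Fin t, (Finset.univ.filter fun i : Fin n => f (Sum.inl i) = c).card :=
        Finset.card_eq_sum_card_fiberwise (fun i _ => Finset.mem_univ _)
      calc n = ∑ c : Fin t, (Finset.univ.filter fun i : Fin n => f (Sum.inl i) = c).card := by
              simpa using h1
        _ ≤ ∑ _c : Fin t, m := Finset.sum_le_sum fun c _ => hc₀ c (Finset.mem_univ c)
        _ = t * m := by simp [mul_comm]
    have hkeyineq : m ^ 2 ≤ 4 * t :=
      KnSub_track_fiber_sq_le n t f g hproper hinj hX c₀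
    calc n ^ 2 ≤ (t * m) ^ 2 := Nat.pow_le_pow_left hsum 2
      _ = t ^ 2 * m ^ 2 := by ring
      _ ≤ t ^ 2 * (4 * t) := Nat.mul_le_mul_left _ hkeyineq
      _ = 4 * t ^ 3 := by ring
  have hR : ((n : ℝ)) ^ 2 ≤ 4 * (t : ℝ) ^ 3 := by exact_mod_cast hmain
  have hx : (0 : ℝ) ≤ (n : ℝ) / 2 := by positivity
  have hty : (0 : ℝ) ≤ (t : ℝ) := by positivity
  have hkey2 : ((n : ℝ) / 2) ^ (2 : ℕ) ≤ ((t : ℝ)) ^ (3 : ℕ) := by nlinarith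
  calc ((n : ℝ) / 2) ^ ((2 : ℝ)/3)
      = (((n : ℝ) / 2) ^ (2 : ℕ)) ^ ((3 : ℝ)⁻¹) := by
        rw [← Real.rpow_natCast ((n : ℝ)/2) 2, ← Real.rpow_mul hx]
        norm_num
    _ ≤ ((t : ℝ) ^ (3 : ℕ)) ^ ((3 : ℝ)⁻¹) :=
        Real.rpow_le_rpow (by positivity) hkey2 (by norm_num)
    _ = (t : ℝ) := by
        rw [← Real.rpow_natCast (t : ℝ) 3, ← Real.rpow_mul hty]
        norm_num
end

section
/- The 1-subdivision K_n' of the complete graph K_n has a track layout with at most p² + 1 + 2·(p choose 2) tracks, where p = ⌈n^{1/3}⌉; in particular the track-number of K_n' is O(n^{2/3}). -/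
section TrackAux

private lemma digits2 {P A B C D : ℕ} (hB : B < P) (hD : D < P)
    (h : A * P + B = C * P + D) : A = C ∧ B = D := by
  have hP : 0 < P := by omega
  have h1 : (A * P + B) / P = A := by
    rw [mul_comm, Nat.mul_add_div hP, Nat.div_eq_of_lt hB, add_zero]
  have h2 : (C * P + D) / P = C := by
    rw [mul_comm, Nat.mul_add_div hP, Nat.div_eq_of_lt hD, add_zero]
  have hAC : A = C := by rw [← h1, ← h2, h]
  subst hAC
  exact ⟨rfl, by linarith⟩

private lemma two_digit_lt {P A B : ℕ} (hA : A < P) (hB : B < P) :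
    A * P + B < P * P := by
  have h := Nat.mul_le_mul_right P (show A + 1 ≤ P from hA)
  rw [add_mul, one_mul] at h
  linarith

private lemma lex_le {P A B C D : ℕ} (hB : B < P)
    (h : A < C ∨ (A = C ∧ B ≤ D)) : A * P + B ≤ C * P + D := by
  rcases h with h | ⟨rfl, h⟩
  · have h2 := Nat.mul_le_mul_right P (show A + 1 ≤ C from h)
    rw [add_mul, one_mul] at h2
    linarith
  · linarith

private lemma enc_inj {p a b a' b' : ℕ} (ha : a < p) (hb : b < p) (hab : a ≠ b)
    (ha' : a' < p) (hb' : b' < p) (hab' : a' ≠ b')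
    (h : a * (p - 1) + (if b < a then b else b - 1)
       = a' * (p - 1) + (if b' < a' then b' else b' - 1)) : a = a' ∧ b = b' := by
  have hr : (if b < a then b else b - 1) < p - 1 := by split <;> omega
  have hr' : (if b' < a' then b' else b' - 1) < p - 1 := by split <;> omega
  obtain ⟨h1, h2⟩ := digits2 hr hr' h
  refine ⟨h1, ?_⟩
  subst h1
  split_ifs at h2 <;> omega

private lemma mod_lt_of_div_eq {p x y : ℕ} (hxy : x < y) (h : x / p = y / p) :
    x % p < y % p := by
  have h1 := Nat.div_add_mod x p
  have h2 := Nat.div_add_mod y p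
  rw [h] at h1
  linarith

private lemma eq_of_div_mod {p x y : ℕ} (h1 : x / p = y / p) (h2 : x % p = y % p) :
    x = y := by
  rw [← Nat.div_add_mod x p, h1, h2, Nat.div_add_mod]

private lemma div_lt_sq {p x : ℕ} (hp : 0 < p) (hx : x < p ^ 3) : x / p < p ^ 2 := by
  rw [Nat.div_lt_iff_lt_mul hp]
  calc x < p ^ 3 := hx
    _ = p ^ 2 * p := by ring

private lemma sub_bound {q : ℕ} (hq : 0 < q) (a : ℕ) : q - 1 - a < q := by omega

private lemma sub_cancel {q a b : ℕ} (ha : a < q) (hb : b < q)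
    (h : q - 1 - a = q - 1 - b) : a = b := by omega

private lemma rev_helper {q lt ht lt' ht' : ℕ} (h1 : lt' ≤ ht') (h2 : ht' = lt)
    (h3 : lt ≤ ht) (h4 : ht < q) (h5 : ht' < q) :
    q - 1 - lt < q - 1 - lt' ∨
      (q - 1 - lt = q - 1 - lt' ∧ q - 1 - ht ≤ q - 1 - ht') := by omega

/-- colour of the division vertex of the edge with endpoints `x < y`. -/
private def fD (p x y : ℕ) : ℕ :=
  if x % p = y % p then p ^ 2
  else p ^ 2 + 1 + (x % p) * (p - 1) + (if y % p < x % p then y % p else y % p - 1)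

/-- position of the division vertex of the edge with endpoints `x < y`. -/
private def gD (p x y : ℕ) : ℕ :=
  if x % p = y % p then (x % p) * p ^ 4 + (x / p) * p ^ 2 + y / p
  else if x % p < y % p then (p ^ 2 - 1 - x / p) * p ^ 2 + (p ^ 2 - 1 - y / p)
  else (x / p) * p ^ 2 + y / p

private lemma fD_ge {p x y : ℕ} : p ^ 2 ≤ fD p x y := by
  unfold fD; split
  · exact le_refl _
  · have hz1 := Nat.zero_le ((x % p) * (p - 1))
    have hz2 := Nat.zero_le (if y % p < x % p then y % p else y % p - 1)
    linarith

private lemma fD_lt {p x y : ℕ} (hp : 0 < p) : fD p x y < p ^ 2 + 1 + p * (p - 1) := by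
  have ha : x % p < p := Nat.mod_lt _ hp
  have hb : y % p < p := Nat.mod_lt _ hp
  unfold fD; split
  · have : 0 ≤ p * (p - 1) := Nat.zero_le _
    linarith
  · rename_i h
    have hred : (if y % p < x % p then y % p else y % p - 1) < p - 1 := by
      split <;> omega
    have h1 : (x % p) * (p - 1) ≤ (p - 1) * (p - 1) :=
      Nat.mul_le_mul_right _ (by omega)
    have h2 : p * (p - 1) = (p - 1) * (p - 1) + (p - 1) := by
      have hp' : p = (p - 1) + 1 := by omega
      calc p * (p - 1) = ((p - 1) + 1) * (p - 1) := by rw [← hp']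
        _ = (p - 1) * (p - 1) + (p - 1) := by ring
    linarith

private lemma div_inj {p x y x' y' : ℕ} (hp : 0 < p)
    (hxy : x < y) (hxy' : x' < y') (hy : y < p ^ 3) (hy' : y' < p ^ 3)
    (hf : fD p x y = fD p x' y') (hg : gD p x y = gD p x' y') :
    x = x' ∧ y = y' := by
  have hq : 0 < p ^ 2 := pow_pos hp 2
  have hdx : x / p < p ^ 2 := div_lt_sq hp (lt_trans hxy hy)
  have hdy : y / p < p ^ 2 := div_lt_sq hp hy
  have hdx' : x' / p < p ^ 2 := div_lt_sq hp (lt_trans hxy' hy')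
  have hdy' : y' / p < p ^ 2 := div_lt_sq hp hy'
  have hax : x % p < p := Nat.mod_lt _ hp
  have hay : y % p < p := Nat.mod_lt _ hp
  have hax' : x' % p < p := Nat.mod_lt _ hp
  have hay' : y' % p < p := Nat.mod_lt _ hp
  simp only [fD, gD] at hf hg
  by_cases h1 : x % p = y % p <;> by_cases h1' : x' % p = y' % p
  · rw [if_pos h1, if_pos h1'] at hg
    rw [show x % p * p ^ 4 + x / p * p ^ 2 + y / p
          = (x % p * p ^ 2 + x / p) * p ^ 2 + y / p from by ring,
        show x' % p * p ^ 4 + x' / p * p ^ 2 + y' / p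
          = (x' % p * p ^ 2 + x' / p) * p ^ 2 + y' / p from by ring] at hg
    obtain ⟨hgl, hgr⟩ := digits2 hdy hdy' hg
    obtain ⟨hga, hgd⟩ := digits2 hdx hdx' hgl
    refine ⟨eq_of_div_mod hgd hga, eq_of_div_mod hgr ?_⟩
    rw [← h1, ← h1']; exact hga
  · exfalso
    rw [if_pos h1, if_neg h1'] at hf
    have hz1 := Nat.zero_le ((x' % p) * (p - 1))
    have hz2 := Nat.zero_le (if y' % p < x' % p then y' % p else y' % p - 1)
    linarith
  · exfalso
    rw [if_neg h1, if_pos h1'] at hf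
    have hz1 := Nat.zero_le ((x % p) * (p - 1))
    have hz2 := Nat.zero_le (if y % p < x % p then y % p else y % p - 1)
    linarith
  · rw [if_neg h1, if_neg h1'] at hf hg
    have henc : x % p * (p - 1) + (if y % p < x % p then y % p else y % p - 1)
        = x' % p * (p - 1) + (if y' % p < x' % p then y' % p else y' % p - 1) := by
      linarith
    obtain ⟨hA, hB⟩ := enc_inj hax hay h1 hax' hay' h1' henc
    rw [← hA, ← hB] at hg
    split_ifs at hg with h2
    · obtain ⟨hgl, hgr⟩ := digits2 (sub_bound hq (y / p)) (sub_bound hq (y' / p)) hg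
      exact ⟨eq_of_div_mod (sub_cancel hdx hdx' hgl) hA,
        eq_of_div_mod (sub_cancel hdy hdy' hgr) hB⟩
    · obtain ⟨hgl, hgr⟩ := digits2 hdy hdy' hg
      exact ⟨eq_of_div_mod hgl hA, eq_of_div_mod hgr hB⟩

private lemma core {p x y x' y' i i' : ℕ} (hp : 0 < p)
    (hxy : x < y) (hxy' : x' < y') (hy : y < p ^ 3) (hy' : y' < p ^ 3)
    (hi : i = x ∨ i = y) (hi' : i' = x' ∨ i' = y')
    (hO : i / p = i' / p) (hf : fD p x y = fD p x' y')
    (hg : i % p < i' % p) : gD p x y ≤ gD p x' y' := by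
  have hq : 0 < p ^ 2 := pow_pos hp 2
  have hdx : x / p < p ^ 2 := div_lt_sq hp (lt_trans hxy hy)
  have hdy : y / p < p ^ 2 := div_lt_sq hp hy
  have hdx' : x' / p < p ^ 2 := div_lt_sq hp (lt_trans hxy' hy')
  have hdy' : y' / p < p ^ 2 := div_lt_sq hp hy'
  have hax : x % p < p := Nat.mod_lt _ hp
  have hay : y % p < p := Nat.mod_lt _ hp
  have hax' : x' % p < p := Nat.mod_lt _ hp
  have hay' : y' % p < p := Nat.mod_lt _ hp
  simp only [fD] at hf
  simp only [gD]
  by_cases h1 : x % p = y % p <;> by_cases h1' : x' % p = y' % p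
  · rw [if_pos h1, if_pos h1']
    have hip : i % p = x % p := by
      rcases hi with rfl | rfl
      · rfl
      · exact h1.symm
    have hip' : i' % p = x' % p := by
      rcases hi' with rfl | rfl
      · rfl
      · exact h1'.symm
    rw [hip, hip'] at hg
    rw [show x % p * p ^ 4 + x / p * p ^ 2 + y / p
          = x % p * (p ^ 2 * p ^ 2) + (x / p * p ^ 2 + y / p) from by ring,
        show x' % p * p ^ 4 + x' / p * p ^ 2 + y' / p
          = x' % p * (p ^ 2 * p ^ 2) + (x' / p * p ^ 2 + y' / p) from by ring]
    exact lex_le (two_digit_lt hdx hdy) (Or.inl hg)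
  · exfalso
    rw [if_pos h1, if_neg h1'] at hf
    have hz1 := Nat.zero_le ((x' % p) * (p - 1))
    have hz2 := Nat.zero_le (if y' % p < x' % p then y' % p else y' % p - 1)
    linarith
  · exfalso
    rw [if_neg h1, if_pos h1'] at hf
    have hz1 := Nat.zero_le ((x % p) * (p - 1))
    have hz2 := Nat.zero_le (if y % p < x % p then y % p else y % p - 1)
    linarith
  · rw [if_neg h1, if_neg h1'] at hf
    rw [if_neg h1, if_neg h1']
    have henc : x % p * (p - 1) + (if y % p < x % p then y % p else y % p - 1)
        = x' % p * (p - 1) + (if y' % p < x' % p then y' % p else y' % p - 1) := by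
      linarith
    obtain ⟨hA, hB⟩ := enc_inj hax hay h1 hax' hay' h1' henc
    rcases hi with hi | hi <;> rcases hi' with hi' | hi' <;>
      rw [hi] at hO hg <;> rw [hi'] at hO hg
    · exact absurd hg (by rw [hA]; exact lt_irrefl _)
    · -- i = x, i' = y'
      have h2 : x % p < y % p := by rw [hB]; exact hg
      have h2' : x' % p < y' % p := by rw [← hA, ← hB]; exact h2
      rw [if_pos h2, if_pos h2']
      exact lex_le (sub_bound hq _)
        (rev_helper (Nat.div_le_div_right hxy'.le) hO.symm
          (Nat.div_le_div_right hxy.le) hdy hdy')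
    · -- i = y, i' = x'
      have h2 : y % p < x % p := by rw [hA]; exact hg
      have hnb : ¬ x % p < y % p := not_lt.2 h2.le
      have hnb' : ¬ x' % p < y' % p := by rw [← hA, ← hB]; exact hnb
      rw [if_neg hnb, if_neg hnb']
      have hle : x / p ≤ y / p := Nat.div_le_div_right hxy.le
      rcases eq_or_lt_of_le hle with heq | hlt
      · exact absurd (mod_lt_of_div_eq hxy heq) hnb
      · exact lex_le hdy (Or.inl (by rw [← hO]; exact hlt))
    · exact absurd hg (by rw [hB]; exact lt_irrefl _)

private def mnE {n : ℕ} (e : Sym2 (Fin n)) : ℕ :=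
  Sym2.lift ⟨fun a b => min a.val b.val, fun a b => min_comm _ _⟩ e

private def mxE {n : ℕ} (e : Sym2 (Fin n)) : ℕ :=
  Sym2.lift ⟨fun a b => max a.val b.val, fun a b => max_comm _ _⟩ e

private lemma mem_mnE_mxE {n : ℕ} {i : Fin n} {e : Sym2 (Fin n)} (h : i ∈ e) :
    (i : ℕ) = mnE e ∨ (i : ℕ) = mxE e := by
  induction e using Sym2.ind with
  | _ a b =>
    simp only [mnE, mxE, Sym2.lift_mk]
    rcases Sym2.mem_iff.1 h with rfl | rfl <;> omega

private lemma mnE_lt_mxE {n : ℕ} {e : Sym2 (Fin n)} (h : ¬ e.IsDiag) :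
    mnE e < mxE e := by
  induction e using Sym2.ind with
  | _ a b =>
    rw [Sym2.mk_isDiag_iff] at h
    have : (a : ℕ) ≠ (b : ℕ) := fun hc => h (Fin.val_injective hc)
    simp only [mnE, mxE, Sym2.lift_mk]
    omega

private lemma mxE_lt {n : ℕ} (e : Sym2 (Fin n)) : mxE e < n := by
  induction e using Sym2.ind with
  | _ a b =>
    simp only [mxE, Sym2.lift_mk]
    exact max_lt a.isLt b.isLt

private lemma eq_of_mnE_mxE {n : ℕ} {e e' : Sym2 (Fin n)}
    (h1 : mnE e = mnE e') (h2 : mxE e = mxE e') : e = e' := by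
  induction e using Sym2.ind with
  | _ a b =>
    induction e' using Sym2.ind with
    | _ c d =>
      simp only [mnE, mxE, Sym2.lift_mk] at h1 h2
      have h : ((a : ℕ) = c ∧ (b : ℕ) = d) ∨ ((a : ℕ) = d ∧ (b : ℕ) = c) := by omega
      rw [Sym2.eq_iff]
      rcases h with ⟨h3, h4⟩ | ⟨h3, h4⟩
      · exact Or.inl ⟨Fin.val_injective h3, Fin.val_injective h4⟩
      · exact Or.inr ⟨Fin.val_injective h3, Fin.val_injective h4⟩

private def fV (p : ℕ) {n : ℕ} (v : Fin n ⊕ {e : Sym2 (Fin n) // ¬ e.IsDiag}) : ℕ :=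
  match v with
  | Sum.inl i => i.val / p
  | Sum.inr e => fD p (mnE e.1) (mxE e.1)

private def gV (p : ℕ) {n : ℕ} (v : Fin n ⊕ {e : Sym2 (Fin n) // ¬ e.IsDiag}) : ℕ :=
  match v with
  | Sum.inl i => i.val % p
  | Sum.inr e => gD p (mnE e.1) (mxE e.1)

end TrackAux

/-- `K_n'` has a track layout with at most `p² + 1 + 2·C(p,2)` tracks, where
`p = ⌈n^(1/3)⌉`; in particular its track-number is `O(n^(2/3))`. -/
theorem KnSub_track_upper_bound (n : ℕ) :
    ∃ (f : (Fin n ⊕ {e : Sym2 (Fin n) // ¬ e.IsDiag}) →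
        Fin ((⌈(n : ℝ) ^ ((1 : ℝ)/3)⌉₊) ^ 2 + 1 + 2 * (⌈(n : ℝ) ^ ((1 : ℝ)/3)⌉₊).choose 2))
      (g : (Fin n ⊕ {e : Sym2 (Fin n) // ¬ e.IsDiag}) → ℕ),
      (∀ v w, (KnSub n).Adj v w → f v ≠ f w) ∧
      (∀ v w, v ≠ w → f v = f w → g v ≠ g w) ∧
      (∀ v w x y, (KnSub n).Adj v w → (KnSub n).Adj x y →
        f v = f x → f w = f y → ¬ (g v < g x ∧ g y < g w)) := by
  rcases Nat.eq_zero_or_pos n with rfl | hn1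
  · -- the vertex set is empty
    have hE : ∀ (v : Fin 0 ⊕ {e : Sym2 (Fin 0) // ¬ e.IsDiag}), False := by
      rintro (i | ⟨e, -⟩)
      · exact i.elim0
      · induction e using Sym2.ind with
        | _ a b => exact a.elim0
    exact ⟨fun v => (hE v).elim, fun v => (hE v).elim,
      fun v => (hE v).elim, fun v => (hE v).elim, fun v => (hE v).elim⟩
  · set p := ⌈(n : ℝ) ^ ((1 : ℝ)/3)⌉₊ with hpdef
    have hp1 : 0 < p := by
      rw [hpdef]
      exact Nat.ceil_pos.2 (Real.rpow_pos_of_pos (by exact_mod_cast hn1) _)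
    have hn3 : n ≤ p ^ 3 := by
      have h1 : (n : ℝ) ^ ((1 : ℝ)/3) ≤ (p : ℝ) := Nat.le_ceil _
      have h2 : (n : ℝ) ≤ (p : ℝ) ^ (3 : ℕ) := by
        calc (n : ℝ) = ((n : ℝ) ^ ((1 : ℝ)/3)) ^ (3 : ℕ) := by
              rw [← Real.rpow_natCast ((n : ℝ) ^ ((1 : ℝ)/3)) 3,
                ← Real.rpow_mul (Nat.cast_nonneg n)]
              norm_num
          _ ≤ (p : ℝ) ^ (3 : ℕ) :=
            pow_le_pow_left₀ (Real.rpow_nonneg (Nat.cast_nonneg n) _) h1 3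
      exact_mod_cast h2
    have h2c : p ^ 2 + 1 + 2 * p.choose 2 = p ^ 2 + 1 + p * (p - 1) := by
      rw [Nat.choose_two_right]
      congr 1
      have he : Even (p * (p - 1)) := by
        rcases Nat.even_or_odd p with h | h
        · exact h.mul_right _
        · exact ((Nat.Odd.sub_odd h odd_one).mul_left _)
      exact Nat.mul_div_cancel' he.two_dvd
    have hflt : ∀ v : Fin n ⊕ {e : Sym2 (Fin n) // ¬ e.IsDiag},
        fV p v < p ^ 2 + 1 + 2 * p.choose 2 := by
      rintro (i | e) <;> rw [h2c]
      · have h := div_lt_sq hp1 (lt_of_lt_of_le i.isLt hn3)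
        simp only [fV]
        have : 0 ≤ p * (p - 1) := Nat.zero_le _
        linarith
      · exact fD_lt hp1
    refine ⟨fun v => ⟨fV p v, hflt v⟩, gV p, ?_, ?_, ?_⟩
    · -- proper colouring
      intro v w hadj
      obtain (⟨i, e, rfl, rfl, hm⟩ | ⟨i, e, rfl, rfl, hm⟩) :
          (∃ i e, v = Sum.inl i ∧ w = Sum.inr e ∧ i ∈ e.1) ∨
          (∃ i e, w = Sum.inl i ∧ v = Sum.inr e ∧ i ∈ e.1) := hadj
      all_goals
        intro hfe
        simp only [Fin.mk.injEq, fV] at hfe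
        have h1 : (i : ℕ) / p < p ^ 2 := div_lt_sq hp1 (lt_of_lt_of_le i.isLt hn3)
        have h2 : p ^ 2 ≤ fD p (mnE e.1) (mxE e.1) := fD_ge
        linarith
    · -- orders are injective on tracks
      rintro (i | e) (i' | e') hne hfe <;>
        simp only [Fin.mk.injEq, fV] at hfe <;> simp only [gV]
      · intro hgg
        exact hne (congrArg Sum.inl (Fin.val_injective (eq_of_div_mod hfe hgg)))
      · exact absurd hfe (Nat.ne_of_lt (lt_of_lt_of_le
          (div_lt_sq hp1 (lt_of_lt_of_le i.isLt hn3)) fD_ge))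
      · exact absurd hfe.symm (Nat.ne_of_lt (lt_of_lt_of_le
          (div_lt_sq hp1 (lt_of_lt_of_le i'.isLt hn3)) fD_ge))
      · intro hgg
        obtain ⟨h1, h2⟩ := div_inj hp1 (mnE_lt_mxE e.2) (mnE_lt_mxE e'.2)
          (lt_of_lt_of_le (mxE_lt e.1) hn3) (lt_of_lt_of_le (mxE_lt e'.1) hn3) hfe hgg
        exact hne (congrArg Sum.inr (Subtype.ext (eq_of_mnE_mxE h1 h2)))
    · -- no X-crossings
      intro v w x y hadj1 hadj2
      obtain (⟨i, e, rfl, rfl, hm⟩ | ⟨i, e, rfl, rfl, hm⟩) :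
          (∃ i e, v = Sum.inl i ∧ w = Sum.inr e ∧ i ∈ e.1) ∨
          (∃ i e, w = Sum.inl i ∧ v = Sum.inr e ∧ i ∈ e.1) := hadj1 <;>
      obtain (⟨i', e', rfl, rfl, hm'⟩ | ⟨i', e', rfl, rfl, hm'⟩) :
          (∃ i e, x = Sum.inl i ∧ y = Sum.inr e ∧ i ∈ e.1) ∨
          (∃ i e, y = Sum.inl i ∧ x = Sum.inr e ∧ i ∈ e.1) := hadj2 <;>
      intro hfv hfw <;>
        simp only [Fin.mk.injEq, fV] at hfv hfw <;>
        simp only [gV] <;> rintro ⟨hg1, hg2⟩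
      · -- (inl i, inr e) vs (inl i', inr e')
        have hc := core hp1 (mnE_lt_mxE e.2) (mnE_lt_mxE e'.2)
          (lt_of_lt_of_le (mxE_lt e.1) hn3) (lt_of_lt_of_le (mxE_lt e'.1) hn3)
          (mem_mnE_mxE hm) (mem_mnE_mxE hm') hfv hfw hg1
        linarith
      · -- (inl i, inr e) vs (inr e', inl i') : colour clash
        exact absurd hfv (Nat.ne_of_lt (lt_of_lt_of_le
          (div_lt_sq hp1 (lt_of_lt_of_le i.isLt hn3)) fD_ge))
      · exact absurd hfv.symm (Nat.ne_of_lt (lt_of_lt_of_le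
          (div_lt_sq hp1 (lt_of_lt_of_le i'.isLt hn3)) fD_ge))
      · -- (inr e, inl i) vs (inr e', inl i')
        have hc := core hp1 (mnE_lt_mxE e'.2) (mnE_lt_mxE e.2)
          (lt_of_lt_of_le (mxE_lt e'.1) hn3) (lt_of_lt_of_le (mxE_lt e.1) hn3)
          (mem_mnE_mxE hm') (mem_mnE_mxE hm) hfw.symm hfv.symm hg2
        linarith
end

section
/- Let {V_i : i ∈ ℤ} be a track layout of a dag G such that for every arc (v,w) with v ∈ V_i and w ∈ V_j we have i < j ≤ i + s. Then the vertex ordering obtained by concatenating the tracks in order (..., V_{-1}, V_0, V_1, ...) is a topological ordering of G in which arcs of equal span are pairwise non-nested; hence G has an upward s-queue layout, so the upward queue-number of G is at most s. -/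
/-- Wrapping lemma: given a track layout of a dag indexed by `ℤ` in which every
arc has span at most `s` (pointing to a higher track), the concatenated track
ordering is topological, arcs of equal span are pairwise non-nested, and the
dag has an upward `s`-queue layout. -/
theorem wrap_to_upward_queue_layout {V : Type*} [Fintype V]
    (A : V → V → Prop) (s : ℕ) (f : V → ℤ) (g : V → ℕ)
    (hproper : ∀ v w, (A v w ∨ A w v) → f v ≠ f w)
    (hinj : ∀ v w, v ≠ w → f v = f w → g v ≠ g w)
    (hX : ∀ v w x y, (A v w ∨ A w v) → (A x y ∨ A y x) →
      f v = f x → f w = f y → ¬ (g v < g x ∧ g y < g w))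
    (hspan : ∀ v w, A v w → f v < f w ∧ f w ≤ f v + s) :
    (∀ v w, A v w → (f v < f w ∨ (f v = f w ∧ g v < g w))) ∧
    (∀ v w x y, A v w → A x y → f w - f v = f y - f x →
      ¬ ((f v < f x ∨ (f v = f x ∧ g v < g x)) ∧
         (f y < f w ∨ (f y = f w ∧ g y < g w)))) ∧
    ∃ (σ : V → ℕ) (q : ∀ v w, A v w → Fin s),
      Function.Injective σ ∧ (∀ v w, A v w → σ v < σ w) ∧
      ∀ v w x y (hvw : A v w) (hxy : A x y), q v w hvw = q x y hxy →
        ¬ (σ v < σ x ∧ σ y < σ w) := by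
  classical
  have topo : ∀ v w, A v w → (f v < f w ∨ (f v = f w ∧ g v < g w)) := by
    intro v w h
    exact Or.inl (hspan v w h).1
  have nonnest : ∀ v w x y, A v w → A x y → f w - f v = f y - f x →
      ¬ ((f v < f x ∨ (f v = f x ∧ g v < g x)) ∧
         (f y < f w ∨ (f y = f w ∧ g y < g w))) := by
    intro v w x y hvw hxy hsp ⟨h1, h2⟩
    rcases h1 with h1 | ⟨hfe, hg⟩
    · rcases h2 with h2 | ⟨hfe2, _⟩
      · omega
      · omega
    · rcases h2 with h2 | ⟨hfe2, hg2⟩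
      · omega
      · exact hX v w x y (Or.inl hvw) (Or.inl hxy) hfe hfe2.symm ⟨hg, hg2⟩
  refine ⟨topo, nonnest, ?_⟩
  -- build σ from the lex order on (f v, g v)
  set e : V → ℤ ×ₗ ℕ := fun v => toLex (f v, g v) with he
  have einj : Function.Injective e := by
    intro v w hvw
    by_contra hne
    have h1 : f v = f w := congrArg (fun p => (ofLex p).1) hvw
    have h2 : g v = g w := congrArg (fun p => (ofLex p).2) hvw
    exact hinj v w hne h1 h2
  have elt : ∀ v w, e v < e w ↔ (f v < f w ∨ (f v = f w ∧ g v < g w)) := by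
    intro v w
    simp [he, Prod.Lex.lt_iff]
  set σ : V → ℕ := fun v => (Finset.univ.filter fun u => e u < e v).card with hσ
  have hmono : ∀ v w, e v < e w → σ v < σ w := by
    intro v w hlt
    apply Finset.card_lt_card
    constructor
    · intro u hu
      simp only [Finset.mem_filter, Finset.mem_univ, true_and] at hu ⊢
      exact hu.trans hlt
    · intro hsub
      have : v ∈ Finset.univ.filter fun u => e u < e v :=
        hsub (by simp [hlt])
      simp at this
  have hσinj : Function.Injective σ := by
    intro v w hvw
    by_contra hne
    rcases lt_trichotomy (e v) (e w) with h | h | h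
    · exact absurd hvw (Nat.ne_of_lt (hmono v w h))
    · exact hne (einj h)
    · exact absurd hvw.symm (Nat.ne_of_lt (hmono w v h))
  have hσlt : ∀ v w, σ v < σ w → e v < e w := by
    intro v w hlt
    rcases lt_trichotomy (e v) (e w) with h | h | h
    · exact h
    · exact absurd (einj h) (by rintro rfl; omega)
    · exact absurd (hmono w v h) (by omega)
  refine ⟨σ, fun v w h => ⟨(f w - f v - 1).toNat, ?_⟩, hσinj, ?_, ?_⟩
  · have := hspan v w h
    omega
  · intro v w h
    exact hmono v w ((elt v w).2 (topo v w h))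
  · intro v w x y hvw hxy hq ⟨h1, h2⟩
    have hb1 := hspan v w hvw
    have hb2 := hspan x y hxy
    have : ((f w - f v - 1).toNat : ℕ) = (f y - f x - 1).toNat :=
      congrArg Fin.val hq
    have hsp : f w - f v = f y - f x := by omega
    exact nonnest v w x y hvw hxy hsp
      ⟨(elt v x).1 (hσlt v x h1), (elt y w).1 (hσlt y w h2)⟩
end

section
/- Let G be a dag with an upward (k,t)-track layout. Then G has an upward k·(t choose 2)-queue layout: order the vertices by any topological ordering of G⁺ (which preserves each track order); then, for each colour and each pair of tracks, the arcs of that colour between that pair of tracks form a queue. -/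
noncomputable def pairEquiv (t : ℕ) : {s : Sym2 (Fin t) // ¬ s.IsDiag} ≃ Fin (t.choose 2) :=
  Fintype.equivFinOfCardEq (by rw [Sym2.card_subtype_not_diag, Fintype.card_fin])

/-- From an upward `(k,t)`-track layout to an upward `k·C(t,2)`-queue layout:
in any topological ordering of `G⁺` (i.e. a topological ordering of `G` that
preserves each track order), for each arc colour and each pair of tracks the
arcs of that colour between those tracks form a queue; hence `G` has an upward
`k·(t choose 2)`-queue layout. -/
theorem upward_track_to_queue {V : Type*} (A : V → V → Prop) (k t : ℕ)
    (f : V → Fin t) (g : V → ℕ) (col : V → V → Fin k)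
    (hproper : ∀ v w, A v w → f v ≠ f w)
    (hinj : ∀ v w, v ≠ w → f v = f w → g v ≠ g w)
    (hX : ∀ v w x y, A v w → A x y → col v w = col x y →
      (f v = f x → f w = f y → ¬ (g v < g x ∧ g y < g w)) ∧
      (f v = f y → f w = f x → ¬ (g v < g y ∧ g x < g w)))
    (σ : V → ℕ) (hσ : Function.Injective σ)
    (htopo : ∀ v w, A v w → σ v < σ w)
    (htrack : ∀ v w, f v = f w → g v < g w → σ v < σ w) :
    (∀ v w x y, A v w → A x y → col v w = col x y → f v = f x → f w = f y →
      ¬ (σ v < σ x ∧ σ y < σ w)) ∧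
    ∃ q : ∀ v w, A v w → Fin (k * t.choose 2),
      ∀ v w x y (hvw : A v w) (hxy : A x y), q v w hvw = q x y hxy →
        ¬ (σ v < σ x ∧ σ y < σ w) := by
  -- key order lemma: σ a < σ b and f a = f b imply g a < g b
  have key : ∀ a b : V, f a = f b → σ a < σ b → g a < g b := by
    intro a b hf hs
    have hab : a ≠ b := fun h => by subst h; exact lt_irrefl _ hs
    rcases lt_or_gt_of_ne (hinj a b hab hf) with h | h
    · exact h
    · exact absurd (htrack b a hf.symm h) (by omega)
  have main : ∀ v w x y, A v w → A x y → col v w = col x y → f v = f x → f w = f y →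
      ¬ (σ v < σ x ∧ σ y < σ w) := by
    intro v w x y hvw hxy hc h1 h2 ⟨s1, s2⟩
    exact (hX v w x y hvw hxy hc).1 h1 h2 ⟨key v x h1 s1, key y w h2.symm s2⟩
  refine ⟨main, ?_⟩
  let e := pairEquiv t
  refine ⟨fun v w hvw => finProdFinEquiv (col v w, e ⟨s(f v, f w),
    by simp [Sym2.mk_isDiag_iff, hproper v w hvw]⟩), ?_⟩
  intro v w x y hvw hxy hq ⟨s1, s2⟩
  have := finProdFinEquiv.injective hq
  have hc : col v w = col x y := (Prod.mk.injEq _ _ _ _ ▸ this).1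
  have hp : (⟨s(f v, f w), _⟩ : {s : Sym2 (Fin t) // ¬ s.IsDiag}) = ⟨s(f x, f y), _⟩ :=
    e.injective (Prod.mk.injEq _ _ _ _ ▸ this).2
  have hs : s(f v, f w) = s(f x, f y) := congrArg Subtype.val hp
  rcases Sym2.eq_iff.mp hs with ⟨h1, h2⟩ | ⟨h1, h2⟩
  · exact main v w x y hvw hxy hc h1 h2 ⟨s1, s2⟩
  · have hvy : σ v < σ y := lt_trans s1 (htopo x y hxy)
    have hxw : σ x < σ w := lt_trans (htopo x y hxy) s2
    exact (hX v w x y hvw hxy hc).2 h1 h2 ⟨key v y h1 hvy, key x w h2.symm hxw⟩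
end

section
/- Every tree dag T has a track layout {V_i : i ∈ ℤ} of its underlying tree such that for every arc (v,w) of T, if v ∈ V_i and w ∈ V_j then i < j ≤ i + 2. Consequently every tree dag has an upward 5-track layout and an upward 2-queue layout. -/
open SimpleGraph

namespace TreeDagAux

open scoped Classical

/-- Value of a walk: sum of steps, `+1` for each forward arc, `-2` for each backward arc. -/
noncomputable def wval {V : Type*} (G : SimpleGraph V) (A : V → V → Prop) :
    {x y : V} → G.Walk x y → ℤ
  | _, _, SimpleGraph.Walk.nil => 0
  | _, _, @SimpleGraph.Walk.cons _ _ x u _ h p => (if A x u then 1 else -2) + wval G A p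

lemma wval_nil {V : Type*} (G : SimpleGraph V) (A : V → V → Prop) {x : V} :
    wval G A (Walk.nil : G.Walk x x) = 0 := rfl

lemma wval_cons {V : Type*} (G : SimpleGraph V) (A : V → V → Prop) {x u y : V}
    (h : G.Adj x u) (p : G.Walk u y) :
    wval G A (Walk.cons h p) = (if A x u then 1 else -2) + wval G A p := rfl

lemma wval_concat {V : Type*} (G : SimpleGraph V) (A : V → V → Prop) {x y z : V}
    (p : G.Walk x y) (h : G.Adj y z) :
    wval G A (p.concat h) = wval G A p + (if A y z then 1 else -2) := by
  induction p with
  | nil => simp [Walk.concat_nil, wval_cons, wval_nil]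
  | cons h' p ih => simp [Walk.concat_cons, wval_cons, ih, add_assoc]

lemma lex_append : ∀ {l1 l2 : List ℕ}, List.Lex (· < ·) l1 l2 → l1.length = l2.length →
    ∀ t1 t2 : List ℕ, List.Lex (· < ·) (l1 ++ t1) (l2 ++ t2) := by
  intro l1 l2 h
  induction h with
  | nil => intro hl; simp at hl
  | rel hab => intro _ t1 t2; exact List.Lex.rel hab
  | cons h ih => intro hl t1 t2; exact List.Lex.cons (ih (by simpa using hl) t1 t2)

/-- Counting order: the number of elements strictly below `v` with respect to `R`. -/
noncomputable def cnt {V : Type*} (R : V → V → Prop) (v : V) : ℕ := {u | R u v}.ncard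

lemma cnt_lt {V : Type*} [Finite V] {R : V → V → Prop}
    (htr : ∀ a b c, R a b → R b c → R a c) (hirr : ∀ a, ¬ R a a)
    {v x : V} (h : R v x) : cnt R v < cnt R x := by
  have h1 : {u | R u v} ⊆ {u | R u x} := fun u hu => htr _ _ _ hu h
  exact Set.ncard_lt_ncard ((Set.ssubset_iff_of_subset h1).mpr ⟨v, h, hirr v⟩)
    (Set.toFinite _)

lemma rel_of_cnt_lt {V : Type*} [Finite V] {R : V → V → Prop}
    (htr : ∀ a b c, R a b → R b c → R a c) (hirr : ∀ a, ¬ R a a)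
    (htot : ∀ a b, a ≠ b → R a b ∨ R b a)
    {v x : V} (h : cnt R v < cnt R x) : R v x := by
  rcases eq_or_ne v x with rfl | hne
  · exact absurd h (lt_irrefl _)
  rcases htot v x hne with h' | h'
  · exact h'
  · exact absurd (cnt_lt htr hirr h') (by omega)

end TreeDagAux

open TreeDagAux in
/-- Every tree dag (acyclic orientation `A` of a tree `G`) has a track layout
indexed by `ℤ` in which every arc has span one or two; consequently it has an
upward 5-track layout and an upward 2-queue layout. -/
theorem tree_dag_layouts {V : Type*} [Fintype V] (G : SimpleGraph V)
    (hT : G.IsTree) (A : V → V → Prop)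
    (hor : ∀ v w, A v w → G.Adj v w)
    (hor2 : ∀ v w, G.Adj v w → (A v w ↔ ¬ A w v)) :
    (∃ (f : V → ℤ) (g : V → ℕ),
      (∀ v w, G.Adj v w → f v ≠ f w) ∧
      (∀ v w, v ≠ w → f v = f w → g v ≠ g w) ∧
      (∀ v w x y, G.Adj v w → G.Adj x y → f v = f x → f w = f y →
        ¬ (g v < g x ∧ g y < g w)) ∧
      (∀ v w, A v w → f v < f w ∧ f w ≤ f v + 2)) ∧
    (∃ (f : V → Fin 5) (g : V → ℕ),
      (∀ v w, G.Adj v w → f v ≠ f w) ∧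
      (∀ v w, v ≠ w → f v = f w → g v ≠ g w) ∧
      (∀ v w x y, G.Adj v w → G.Adj x y → f v = f x → f w = f y →
        ¬ (g v < g x ∧ g y < g w)) ∧
      (∃ σ : V → ℕ, Function.Injective σ ∧ (∀ v w, A v w → σ v < σ w) ∧
        (∀ v w, f v = f w → g v < g w → σ v < σ w))) ∧
    (∃ (σ : V → ℕ) (q : ∀ v w, A v w → Fin 2),
      Function.Injective σ ∧ (∀ v w, A v w → σ v < σ w) ∧
      ∀ v w x y (hvw : A v w) (hxy : A x y), q v w hvw = q x y hxy →
        ¬ (σ v < σ x ∧ σ y < σ w)) := by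
  classical
  have hne : Nonempty V := hT.isConnected.nonempty
  set r := Classical.arbitrary V with hr
  have EU := hT.existsUnique_path
  choose P hP hPU using fun v => EU r v
  -- every edge extends the path of one endpoint to the path of the other
  have split : ∀ a b (hab : G.Adj a b),
      P b = (P a).concat hab ∨ P a = (P b).concat hab.symm := by
    intro a b hab
    by_cases hb : b ∈ (P a).support
    · right
      have hsingle : (Walk.cons hab.symm Walk.nil : G.Walk b a).IsPath := by
        rw [Walk.cons_isPath_iff]
        exact ⟨Walk.IsPath.nil, by simp [hab.ne']⟩
      have h2 : (P a).dropUntil b hb = Walk.cons hab.symm Walk.nil :=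
        (EU b a).unique ((hP a).dropUntil hb) hsingle
      have h1 : P b = (P a).takeUntil b hb := (hPU b _ ((hP a).takeUntil hb)).symm
      rw [Walk.concat_eq_append, h1, ← h2, Walk.take_spec]
    · left
      have hp' : ((P a).concat hab).IsPath := by
        rw [← Walk.isPath_reverse_iff, Walk.reverse_concat, Walk.cons_isPath_iff]
        exact ⟨(hP a).reverse, by simpa [Walk.support_reverse] using hb⟩
      exact (hPU b _ hp').symm
  set e : V → ℕ := fun v => ((Fintype.equivFin V) v : ℕ) with he
  have einj : Function.Injective e := fun a b h =>
    (Fintype.equivFin V).injective (Fin.val_injective h)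
  set d : V → ℕ := fun v => (P v).length with hd
  set key : V → List ℕ := fun v => (P v).support.map e with hkey
  set f : V → ℤ := fun v => wval G A (P v) with hf
  have len : ∀ a, (key a).length = d a + 1 := by
    intro a; simp [hkey, hd, Walk.length_support]
  have keyinj : ∀ a b : V, key a = key b → a = b := by
    intro a b h
    have hsup : (P a).support = (P b).support := List.map_injective_iff.mpr einj h
    have h1 : (P a).reverse.support = (P b).reverse.support := by
      rw [Walk.support_reverse, Walk.support_reverse, hsup]
    rw [Walk.support_eq_cons ((P a).reverse), Walk.support_eq_cons ((P b).reverse)] at h1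
    simpa using congrArg List.head? h1
  -- the child facts for each edge
  have chd : ∀ a b, ∀ hab : G.Adj a b,
      ((f b = f a + 1 ∨ f b = f a - 2) ∧ d b = d a + 1 ∧ key b = key a ++ [e b]) ∨
      ((f a = f b + 1 ∨ f a = f b - 2) ∧ d a = d b + 1 ∧ key a = key b ++ [e a]) := by
    intro a b hab
    have main : ∀ x y : V, ∀ hxy : G.Adj x y, P y = (P x).concat hxy →
        (f y = f x + 1 ∨ f y = f x - 2) ∧ d y = d x + 1 ∧ key y = key x ++ [e y] := by
      intro x y hxy hP'
      refine ⟨?_, ?_, ?_⟩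
      · have : f y = f x + (if A x y then 1 else -2) := by
          rw [hf]; simp only; rw [hP', wval_concat]
        by_cases hA : A x y
        · left; rw [this, if_pos hA]
        · right; rw [this, if_neg hA]; ring
      · simp only [hd]; rw [hP', Walk.length_concat]
      · simp only [hkey]; rw [hP', Walk.support_concat]
        simp [List.concat_eq_append]
    rcases split a b hab with h | h
    · exact Or.inl (main a b hab h)
    · exact Or.inr (main b a hab.symm h)
  -- arcs of edges
  have harc : ∀ v w, A v w → f w = f v + 1 ∨ f w = f v + 2 := by
    intro v w hA
    have hadj := hor v w hA
    have hnA : ¬ A w v := (hor2 v w hadj).1 hA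
    rcases split v w hadj with h | h
    · left
      have : f w = f v + (if A v w then 1 else -2) := by
        rw [hf]; simp only; rw [h, wval_concat]
      rw [this, if_pos hA]
    · right
      have : f v = f w + (if A w v then 1 else -2) := by
        rw [hf]; simp only; rw [h, wval_concat]
      rw [if_neg hnA] at this; omega
  have horA : ∀ v w, G.Adj v w → A v w ∨ A w v := by
    intro v w h
    by_cases hA : A v w
    · exact Or.inl hA
    · exact Or.inr ((hor2 w v h.symm).2 hA)
  have espan : ∀ v w, G.Adj v w →
      f w = f v + 1 ∨ f w = f v + 2 ∨ f v = f w + 1 ∨ f v = f w + 2 := by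
    intro v w h
    rcases horA v w h with hA | hA
    · rcases harc v w hA with h' | h' <;> omega
    · rcases harc w v hA with h' | h' <;> omega
  -- the order within tracks
  set R : V → V → Prop := fun a b =>
    d a < d b ∨ (d a = d b ∧ List.Lex (· < ·) (key a) (key b)) with hR
  have Rtrans : ∀ a b c : V, R a b → R b c → R a c := by
    intro a b c h1 h2
    rcases h1 with h1 | ⟨h1, h1'⟩ <;> rcases h2 with h2 | ⟨h2, h2'⟩
    · exact Or.inl (by omega)
    · exact Or.inl (by omega)
    · exact Or.inl (by omega)
    · exact Or.inr ⟨by omega, List.lt_trans (α := ℕ) h1' h2'⟩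
  have Rirr : ∀ a : V, ¬ R a a := by
    intro a h
    rcases h with h | ⟨_, h⟩
    · exact lt_irrefl _ h
    · exact asymm h h
  have Rtotal : ∀ a b : V, a ≠ b → R a b ∨ R b a := by
    intro a b hab
    rcases lt_trichotomy (d a) (d b) with h | h | h
    · exact Or.inl (Or.inl h)
    · have tri := (inferInstance : IsTrichotomous (List ℕ) (List.Lex (· < ·)))
      rcases trichotomous_of (List.Lex (· < ·)) (key a) (key b) with hl | hl | hl
      · exact Or.inl (Or.inr ⟨h, hl⟩)
      · exact absurd (keyinj a b hl) hab
      · exact Or.inr (Or.inr ⟨h.symm, hl⟩)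
    · exact Or.inr (Or.inl h)
  -- the key no-crossing lemma
  have noCross : ∀ v w x y : V, G.Adj v w → G.Adj x y → f v = f x → f w = f y →
      R v x → R y w → False := by
    intro v w x y hvw hxy hfv hfw hRvx hRyw
    rcases chd v w hvw with ⟨hs1, hd1, hk1⟩ | ⟨hs1, hd1, hk1⟩ <;>
      rcases chd x y hxy with ⟨hs2, hd2, hk2⟩ | ⟨hs2, hd2, hk2⟩
    · -- w child of v, y child of x
      rcases hRvx with hlt | ⟨hdeq, hkvx⟩
      · rcases hRyw with h' | ⟨h', _⟩ <;> omega
      · rcases hRyw with h' | ⟨_, hkyw⟩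
        · omega
        · have : List.Lex (· < ·) (key w) (key y) := by
            rw [hk1, hk2]
            exact lex_append hkvx (by rw [len, len]; omega) _ _
          exact asymm this hkyw
    · -- w child of v, x child of y : spans incompatible
      omega
    · omega
    · -- v child of w, x child of y
      rcases hRyw with hlt | ⟨hdeq, hkyw⟩
      · rcases hRvx with h' | ⟨h', _⟩ <;> omega
      · rcases hRvx with h' | ⟨_, hkvx⟩
        · omega
        · have : List.Lex (· < ·) (key x) (key v) := by
            rw [hk1, hk2]
            exact lex_append hkyw (by rw [len, len]; omega) _ _
          exact asymm this hkvx
  set g : V → ℕ := fun v => cnt R v with hg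
  have gmono : ∀ {a b : V}, R a b → g a < g b := fun h => cnt_lt Rtrans Rirr h
  have gR : ∀ {a b : V}, g a < g b → R a b := fun h => rel_of_cnt_lt Rtrans Rirr Rtotal h
  have ginj : Function.Injective g := by
    intro a b h
    by_contra hab
    rcases Rtotal a b hab with h' | h' <;> (have := gmono h'; omega)
  -- order for the upward layouts
  set R' : V → V → Prop := fun a b => f a < f b ∨ (f a = f b ∧ R a b) with hR'
  have R'trans : ∀ a b c : V, R' a b → R' b c → R' a c := by
    intro a b c h1 h2
    rcases h1 with h1 | ⟨h1, h1'⟩ <;> rcases h2 with h2 | ⟨h2, h2'⟩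
    · exact Or.inl (by omega)
    · exact Or.inl (by omega)
    · exact Or.inl (by omega)
    · exact Or.inr ⟨by omega, Rtrans _ _ _ h1' h2'⟩
  have R'irr : ∀ a : V, ¬ R' a a := by
    intro a h
    rcases h with h | ⟨_, h⟩
    · exact lt_irrefl _ h
    · exact Rirr a h
  have R'total : ∀ a b : V, a ≠ b → R' a b ∨ R' b a := by
    intro a b hab
    rcases lt_trichotomy (f a) (f b) with h | h | h
    · exact Or.inl (Or.inl h)
    · rcases Rtotal a b hab with h' | h'
      · exact Or.inl (Or.inr ⟨h, h'⟩)
      · exact Or.inr (Or.inr ⟨h.symm, h'⟩)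
    · exact Or.inr (Or.inl h)
  set g' : V → ℕ := fun v => cnt R' v with hg'
  have g'mono : ∀ {a b : V}, R' a b → g' a < g' b := fun h => cnt_lt R'trans R'irr h
  have g'R : ∀ {a b : V}, g' a < g' b → R' a b := fun h =>
    rel_of_cnt_lt R'trans R'irr R'total h
  have g'inj : Function.Injective g' := by
    intro a b h
    by_contra hab
    rcases R'total a b hab with h' | h' <;> (have := g'mono h'; omega)
  have g'arc : ∀ v w, A v w → g' v < g' w := by
    intro v w hA
    have := harc v w hA
    exact g'mono (Or.inl (by omega))
  -- the mod-5 track assignment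
  set f5 : V → Fin 5 := fun v => (⟨(f v % 5).toNat, by omega⟩ : Fin 5) with hf5
  have m5 : ∀ a b : V, f5 a = f5 b ↔ f a % 5 = f b % 5 := by
    intro a b
    constructor
    · intro h
      have := congrArg Fin.val h
      simp only [hf5] at this
      omega
    · intro h
      apply Fin.ext
      simp only [hf5]
      omega
  refine ⟨⟨f, g, ?_, ?_, ?_, ?_⟩, ⟨f5, g', ?_, ?_, ?_, g', g'inj, g'arc, fun v w _ h => h⟩,
    ⟨g', fun v w hvw => if f w = f v + 1 then 0 else 1, g'inj, g'arc, ?_⟩⟩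
  · intro v w h
    rcases espan v w h with h' | h' | h' | h' <;> omega
  · intro v w hvw _ hg
    exact hvw (ginj hg)
  · rintro v w x y hvw hxy hfv hfw ⟨h1, h2⟩
    exact noCross v w x y hvw hxy hfv hfw (gR h1) (gR h2)
  · intro v w hA
    rcases harc v w hA with h | h <;> omega
  · intro v w h
    rw [Ne, m5]
    rcases espan v w h with h' | h' | h' | h' <;> omega
  · intro v w hvw _ hg
    exact hvw (g'inj hg)
  · rintro v w x y hvw hxy h5v h5w ⟨h1, h2⟩
    have hm1 : f v % 5 = f x % 5 := (m5 v x).mp h5v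
    have hm2 : f w % 5 = f y % 5 := (m5 w y).mp h5w
    have sp1 := espan v w hvw
    have sp2 := espan x y hxy
    rcases g'R h1 with hlt | ⟨heq, hRvx⟩
    · have hwy : f w < f y := by omega
      rcases g'R h2 with h' | ⟨h', _⟩ <;> omega
    · have hfw : f w = f y := by omega
      rcases g'R h2 with h' | ⟨_, hRyw⟩
      · omega
      · exact noCross v w x y hvw hxy heq hfw hRvx hRyw
  · rintro v w x y hvw hxy hq ⟨h1, h2⟩
    beta_reduce at hq
    rcases harc v w hvw with c1 | c1 <;> rcases harc x y hxy with c2 | c2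
    · rcases g'R h1 with hlt | ⟨heq, hRvx⟩
      · rcases g'R h2 with h' | ⟨h', _⟩ <;> omega
      · have hfw : f w = f y := by omega
        rcases g'R h2 with h' | ⟨_, hRyw⟩
        · omega
        · exact noCross v w x y (hor v w hvw) (hor x y hxy) heq hfw hRvx hRyw
    · rw [if_pos c1, if_neg (by omega)] at hq
      exact absurd hq (by decide)
    · rw [if_neg (by omega), if_pos c2] at hq
      exact absurd hq (by decide)
    · rcases g'R h1 with hlt | ⟨heq, hRvx⟩
      · rcases g'R h2 with h' | ⟨h', _⟩ <;> omega
      · have hfw : f w = f y := by omega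
        rcases g'R h2 with h' | ⟨_, hRyw⟩
        · omega
        · exact noCross v w x y (hor v w hvw) (hor x y hxy) heq hfw hRvx hRyw
end

section
/- Every caterpillar dag C has a track layout {V_i : i ∈ ℤ} such that for every arc (v,w) of C, if v ∈ V_i then w ∈ V_{i+1}. Consequently every caterpillar dag has an upward 3-track layout and an upward 1-queue layout. -/
open SimpleGraph Walk

namespace CaterpillarAux

variable {V : Type*} {G : SimpleGraph V}

/-- Sum of a cost function over the darts of a walk. -/
def wval (c : V → V → ℤ) {u v : V} (w : G.Walk u v) : ℤ :=
  (w.darts.map fun d => c d.toProd.1 d.toProd.2).sum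

@[simp] lemma wval_nil (c : V → V → ℤ) (u : V) :
    wval c (Walk.nil : G.Walk u u) = 0 := rfl

@[simp] lemma wval_cons (c : V → V → ℤ) {u v w : V} (h : G.Adj u v) (p : G.Walk v w) :
    wval c (Walk.cons h p) = c u v + wval c p := by
  simp [wval, Walk.darts_cons]

@[simp] lemma wval_append (c : V → V → ℤ) {u v w : V} (p : G.Walk u v) (q : G.Walk v w) :
    wval c (p.append q) = wval c p + wval c q := by
  simp [wval, Walk.darts_append]

lemma wval_concat (c : V → V → ℤ) {u v w : V} (p : G.Walk u v) (h : G.Adj v w) :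
    wval c (p.concat h) = wval c p + c v w := by
  simp [Walk.concat_eq_append]

lemma no_chord [DecidableEq V] (huniq : ∀ ⦃x y : V⦄ (p q : G.Walk x y), p.IsPath → q.IsPath → p = q)
    {a c b v : V} (h : G.Adj a c) (p : G.Walk c b) (hp : (Walk.cons h p).IsPath)
    (hv : v ∈ p.support) (hadj : G.Adj a v) : v = c := by
  by_contra hvc
  rw [Walk.cons_isPath_iff] at hp
  have hpath1 : (Walk.cons h (p.takeUntil v hv)).IsPath := by
    refine (hp.1.takeUntil hv).cons ?_
    exact fun ha => hp.2 (Walk.support_takeUntil_subset _ hv ha)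
  have hpath2 : (Walk.cons hadj Walk.nil : G.Walk a v).IsPath := by
    simp [Walk.isPath_def, hadj.ne]
  have heq := huniq _ _ hpath1 hpath2
  have hlen := congrArg Walk.length heq
  simp [Walk.length_cons] at hlen
  exact hvc hlen.symm

lemma spine_walk [DecidableEq V] {a b : V} (P : G.Walk a b) (hP : P.IsPath) {s t : V}
    (hs : s ∈ P.support) (ht : t ∈ P.support) :
    ∃ Q : G.Walk s t, Q.IsPath ∧ ∀ x ∈ Q.support, x ∈ P.support := by
  by_cases htt : t ∈ (P.takeUntil s hs).support
  · refine ⟨((P.takeUntil s hs).dropUntil t htt).reverse,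
      ((hP.takeUntil hs).dropUntil htt).reverse, ?_⟩
    intro x hx
    rw [Walk.support_reverse] at hx
    exact Walk.support_takeUntil_subset _ hs
      (Walk.support_dropUntil_subset _ htt (List.mem_reverse.1 hx))
  · have ht2 : t ∈ (P.dropUntil s hs).support := by
      have hspec := P.take_spec hs
      rw [← hspec, Walk.mem_support_append_iff] at ht
      tauto
    exact ⟨(P.dropUntil s hs).takeUntil t ht2, (hP.dropUntil hs).takeUntil ht2,
      fun x hx => Walk.support_dropUntil_subset _ hs (Walk.support_takeUntil_subset _ ht2 hx)⟩

lemma spine_adj_idx [DecidableEq V]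
    (huniq : ∀ ⦃x y : V⦄ (p q : G.Walk x y), p.IsPath → q.IsPath → p = q) :
    ∀ {a b : V} (P : G.Walk a b), P.IsPath → ∀ u v, u ∈ P.support → v ∈ P.support →
      G.Adj u v →
      P.support.idxOf v = P.support.idxOf u + 1 ∨
      P.support.idxOf u = P.support.idxOf v + 1 := by
  intro a b P
  induction P with
  | nil =>
    intro hP u v hu hv huv
    simp [Walk.support_nil] at hu hv
    subst hu; subst hv
    exact absurd rfl huv.ne
  | @cons a c b h p ih =>
    intro hP u v hu hv huv
    have hP' := hP
    rw [Walk.cons_isPath_iff] at hP'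
    rw [Walk.support_cons] at hu hv ⊢
    rcases List.mem_cons.1 hu with rfl | hu'
    · rcases List.mem_cons.1 hv with rfl | hv'
      · exact absurd rfl huv.ne
      · have hvc := no_chord huniq h p hP hv' huv
        subst hvc
        left
        rw [List.idxOf_cons_ne _ (huv.ne), Walk.support_eq_cons p,
          List.idxOf_cons_self, List.idxOf_cons_self]
    · rcases List.mem_cons.1 hv with rfl | hv'
      · have huc := no_chord huniq h p hP hu' huv.symm
        subst huc
        right
        rw [List.idxOf_cons_ne _ (Ne.symm huv.ne), Walk.support_eq_cons p,
          List.idxOf_cons_self, List.idxOf_cons_self]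
      · have hrec := ih hP'.1 u v hu' hv' huv
        have hua : u ≠ a := fun e => hP'.2 (e ▸ hu')
        have hva : v ≠ a := fun e => hP'.2 (e ▸ hv')
        rw [List.idxOf_cons_ne _ (Ne.symm hua), List.idxOf_cons_ne _ (Ne.symm hva)]
        omega

end CaterpillarAux

/-- Every caterpillar dag (acyclic orientation `A` of a caterpillar `G`, i.e. a
tree with a path such that every vertex is on it or adjacent to it) has a track
layout indexed by `ℤ` in which every arc has span exactly one; consequently it
has an upward 3-track layout and an upward 1-queue layout. -/
theorem caterpillar_dag_layouts {V : Type*} [Fintype V] (G : SimpleGraph V)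
    (hT : G.IsTree)
    (hcat : ∃ (a b : V) (P : G.Walk a b), P.IsPath ∧
      ∀ v, v ∈ P.support ∨ ∃ w ∈ P.support, G.Adj v w)
    (A : V → V → Prop)
    (hor : ∀ v w, A v w → G.Adj v w)
    (hor2 : ∀ v w, G.Adj v w → (A v w ↔ ¬ A w v)) :
    (∃ (f : V → ℤ) (g : V → ℕ),
      (∀ v w, G.Adj v w → f v ≠ f w) ∧
      (∀ v w, v ≠ w → f v = f w → g v ≠ g w) ∧
      (∀ v w x y, G.Adj v w → G.Adj x y → f v = f x → f w = f y →
        ¬ (g v < g x ∧ g y < g w)) ∧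
      (∀ v w, A v w → f w = f v + 1)) ∧
    (∃ (f : V → Fin 3) (g : V → ℕ),
      (∀ v w, G.Adj v w → f v ≠ f w) ∧
      (∀ v w, v ≠ w → f v = f w → g v ≠ g w) ∧
      (∀ v w x y, G.Adj v w → G.Adj x y → f v = f x → f w = f y →
        ¬ (g v < g x ∧ g y < g w)) ∧
      (∃ σ : V → ℕ, Function.Injective σ ∧ (∀ v w, A v w → σ v < σ w) ∧
        (∀ v w, f v = f w → g v < g w → σ v < σ w))) ∧
    (∃ σ : V → ℕ, Function.Injective σ ∧ (∀ v w, A v w → σ v < σ w) ∧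
      ∀ v w x y, A v w → A x y → ¬ (σ v < σ x ∧ σ y < σ w)) := by
  classical
  obtain ⟨a, b, P, hP, hcov⟩ := hcat
  have huniq : ∀ ⦃x y : V⦄ (p q : G.Walk x y), p.IsPath → q.IsPath → p = q :=
    fun x y p q hp hq => (hT.existsUnique_path x y).unique hp hq
  -- the level function f
  set c : V → V → ℤ := fun u v => if A u v then 1 else -1 with hcdef
  let pa : ∀ v : V, G.Walk a v := fun v => (hT.existsUnique_path a v).choose
  have hpa : ∀ v, (pa v).IsPath := fun v => (hT.existsUnique_path a v).choose_spec.1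
  set f : V → ℤ := fun v => CaterpillarAux.wval c (pa v) with hfdef
  have hcsum : ∀ u v, G.Adj u v → c u v + c v u = 0 := by
    intro u v huv
    by_cases hA : A u v
    · have hA' : ¬ A v u := (hor2 u v huv).1 hA
      simp [hcdef, hA, hA']
    · have hA' : A v u := (hor2 v u huv.symm).2 hA
      simp [hcdef, hA, hA']
  have hf_adj : ∀ u v, G.Adj u v → f v = f u + c u v := by
    intro u v huv
    by_cases hv : v ∈ (pa u).support
    · have hsplit := (pa u).take_spec hv
      have h1 : (pa u).takeUntil v hv = pa v := huniq _ _ ((hpa u).takeUntil hv) (hpa v)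
      have h2 : (pa u).dropUntil v hv = Walk.cons huv.symm Walk.nil := by
        refine huniq _ _ ((hpa u).dropUntil hv) ?_
        simp [Walk.isPath_def, Ne.symm huv.ne]
      have hkey := congrArg (CaterpillarAux.wval c) hsplit
      rw [CaterpillarAux.wval_append, h1, h2] at hkey
      rw [CaterpillarAux.wval_cons, CaterpillarAux.wval_nil] at hkey
      have := hcsum u v huv
      show CaterpillarAux.wval c (pa v) = CaterpillarAux.wval c (pa u) + c u v
      omega
    · have hW : ((pa u).concat huv).IsPath := by
        rw [Walk.isPath_def, Walk.support_concat]
        refine List.Nodup.append (hpa u).support_nodup (List.nodup_singleton v) ?_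
        intro x hx hx'
        simp only [List.mem_singleton] at hx'
        subst hx'
        exact hv hx
      have heq := huniq _ _ hW (hpa v)
      have hkey := congrArg (CaterpillarAux.wval c) heq
      rw [CaterpillarAux.wval_concat] at hkey
      exact hkey.symm
  have hfA : ∀ u v, A u v → f v = f u + 1 := by
    intro u v h
    have := hf_adj u v (hor u v h)
    simpa [hcdef, h] using this
  have hf_pm : ∀ u v, G.Adj u v → f v = f u + 1 ∨ f v = f u - 1 := by
    intro u v h
    have := hf_adj u v h
    by_cases hA : A u v
    · left; simpa [hcdef, hA] using this
    · right; simp only [hcdef] at this; rw [if_neg hA] at this; omega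
  have hf_ne : ∀ u v, G.Adj u v → f v ≠ f u := by
    intro u v h
    rcases hf_pm u v h with h' | h' <;> omega
  -- the chosen spine neighbour
  have hnb : ∀ v : V, ∃ s, s ∈ P.support ∧ (v ∈ P.support → s = v) ∧
      (v ∉ P.support → G.Adj v s) := by
    intro v
    by_cases hv : v ∈ P.support
    · exact ⟨v, hv, fun _ => rfl, fun h => absurd hv h⟩
    · obtain ⟨w, hw, hadj⟩ := (hcov v).resolve_left hv
      exact ⟨w, hw, fun h => absurd h hv, fun _ => hadj⟩
  choose nb hnbL hnbself hnbadj using hnb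
  set idx : V → ℕ := fun v => P.support.idxOf (nb v) with hidxdef
  have hidxself : ∀ v, v ∈ P.support → idx v = P.support.idxOf v := by
    intro v hv
    rw [hidxdef]
    simp only []
    rw [hnbself v hv]
  -- ordering within tracks
  set N : ℕ := Fintype.card V with hNdef
  have hNpos : 0 < N := Fintype.card_pos_iff.2 ⟨a⟩
  let e : V ≃ Fin N := Fintype.equivFin V
  set g : V → ℕ := fun v => idx v * N + (e v : ℕ) with hgdef
  have heN : ∀ v, (e v : ℕ) < N := fun v => (e v).isLt
  have hg_lt : ∀ u v, idx u < idx v → g u < g v := by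
    intro u v h
    have h1 : (e u : ℕ) < N := heN u
    calc g u = idx u * N + (e u : ℕ) := rfl
      _ < idx u * N + N := by omega
      _ = (idx u + 1) * N := by ring
      _ ≤ idx v * N := Nat.mul_le_mul_right N h
      _ ≤ g v := Nat.le_add_right _ _
  have hginj : Function.Injective g := by
    intro u v huv
    have hidxuv : idx u = idx v := by
      rcases lt_trichotomy (idx u) (idx v) with h' | h' | h'
      · have := hg_lt u v h'; omega
      · exact h'
      · have := hg_lt v u h'; omega
    have h1 : idx u * N + (e u : ℕ) = idx v * N + (e v : ℕ) := huv
    rw [hidxuv] at h1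
    have h2 : (e u : ℕ) = (e v : ℕ) := by omega
    exact e.injective (Fin.ext h2)
  have hg_le : ∀ u v, g u < g v → idx u ≤ idx v := by
    intro u v h
    by_contra hc
    push_neg at hc
    have := hg_lt v u hc
    omega
  -- structural facts about the caterpillar
  have hF2 : ∀ u s t, u ∉ P.support → s ∈ P.support → t ∈ P.support →
      G.Adj u s → G.Adj u t → s = t := by
    intro u s t hu hs ht h1 h2
    by_contra hst
    obtain ⟨Q, hQ, hQs⟩ := CaterpillarAux.spine_walk P hP hs ht
    have hsu : s ≠ u := fun h => hu (h ▸ hs)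
    have htu : t ≠ u := fun h => hu (h ▸ ht)
    have hR : (Walk.cons h1.symm (Walk.cons h2 Walk.nil) : G.Walk s t).IsPath := by
      simp [Walk.isPath_def, hsu, hst, Ne.symm htu]
    have heq := huniq _ _ hQ hR
    have hu' : u ∈ Q.support := by rw [heq]; simp
    exact hu (hQs u hu')
  have hF1 : ∀ u v, G.Adj u v → u ∉ P.support → v ∉ P.support → False := by
    intro u v huv hu hv
    have hs := hnbadj u hu
    have hsL := hnbL u
    have ht := hnbadj v hv
    have htL := hnbL v
    by_cases hst : nb u = nb v
    · have hadj2 : G.Adj (nb u) v := by rw [hst]; exact ht.symm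
      have hpath1 : (Walk.cons huv Walk.nil : G.Walk u v).IsPath := by
        simp [Walk.isPath_def, huv.ne]
      have hpath2 : (Walk.cons hs (Walk.cons hadj2 Walk.nil) : G.Walk u v).IsPath := by
        have h1 : u ≠ nb u := fun h => hu (h ▸ hsL)
        have h2 : nb u ≠ v := fun h => hv (h ▸ hsL)
        simp [Walk.isPath_def, h1, huv.ne, h2]
      have heq := huniq _ _ hpath1 hpath2
      have := congrArg Walk.length heq
      simp [Walk.length_cons] at this
    · obtain ⟨Q, hQ, hQs⟩ := CaterpillarAux.spine_walk P hP hsL htL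
      have h1 : nb u ≠ u := fun h => hu (h ▸ hsL)
      have h2 : nb u ≠ v := fun h => hv (h ▸ hsL)
      have h3 : u ≠ nb v := fun h => hu (h ▸ htL)
      have h4 : v ≠ nb v := fun h => hv (h ▸ htL)
      have hR : (Walk.cons hs.symm (Walk.cons huv (Walk.cons ht Walk.nil)) :
          G.Walk (nb u) (nb v)).IsPath := by
        simp [Walk.isPath_def, h1, h2, hst, huv.ne, h3, h4, Ne.symm h4]
      have heq := huniq _ _ hQ hR
      have hu' : u ∈ Q.support := by rw [heq]; simp
      exact hu (hQs u hu')
  have hidL : ∀ z z', z ∈ P.support → z' ∈ P.support → idx z = idx z' → z = z' := by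
    intro z z' hz hz' h
    rw [hidxself z hz, hidxself z' hz'] at h
    exact (List.idxOf_inj hz).1 h
  have hEC : ∀ u v, G.Adj u v →
      (u ∈ P.support ∧ v ∈ P.support ∧ (idx v = idx u + 1 ∨ idx u = idx v + 1)) ∨
      (u ∈ P.support ∧ v ∉ P.support ∧ idx v = idx u) ∨
      (u ∉ P.support ∧ v ∈ P.support ∧ idx u = idx v) := by
    intro u v huv
    by_cases hu : u ∈ P.support <;> by_cases hv : v ∈ P.support
    · left
      refine ⟨hu, hv, ?_⟩
      have := CaterpillarAux.spine_adj_idx huniq P hP u v hu hv huv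
      rw [hidxself u hu, hidxself v hv]
      exact this
    · right; left
      refine ⟨hu, hv, ?_⟩
      have hnbv : nb v = u := hF2 v (nb v) u hv (hnbL v) hu (hnbadj v hv) huv.symm
      rw [hidxdef]
      simp only []
      rw [hnbv, hnbself u hu]
    · right; right
      refine ⟨hu, hv, ?_⟩
      have hnbu : nb u = v := hF2 u (nb u) v hu (hnbL u) hv (hnbadj u hu) huv
      rw [hidxdef]
      simp only []
      rw [hnbu, hnbself v hv]
    · exact absurd (hF1 u v huv hu hv) (fun h => h)
  -- the no-crossing property in the ℤ-track layout
  have hcross : ∀ v w x y, G.Adj v w → G.Adj x y → f v = f x → f w = f y →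
      ¬ (g v < g x ∧ g y < g w) := by
    rintro v w x y hvw hxy hfvx hfwy ⟨h1, h2⟩
    have hpvx : idx v ≤ idx x := hg_le _ _ h1
    have hpyw : idx y ≤ idx w := hg_le _ _ h2
    have hvx : v ≠ x := by rintro rfl; exact absurd h1 (lt_irrefl _)
    have hyw : y ≠ w := by rintro rfl; exact absurd h2 (lt_irrefl _)
    have hfwv := hf_ne v w hvw
    have hfyx := hf_ne x y hxy
    rcases hEC v w hvw with ⟨hvL, hwL, hS1⟩ | ⟨hvL, hwL, hq1⟩ | ⟨hvL, hwL, hq1⟩ <;>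
      rcases hEC x y hxy with ⟨hxL, hyL, hS2⟩ | ⟨hxL, hyL, hq2⟩ | ⟨hxL, hyL, hq2⟩
    -- (S, S)
    · have hvx' : idx v ≠ idx x := fun h => hvx (hidL v x hvL hxL h)
      have hyw' : idx y ≠ idx w := fun h => hyw (hidL y w hyL hwL h)
      have hwx : idx w = idx x := by omega
      have : w = x := hidL w x hwL hxL hwx
      exact hfwv (by rw [this, ← hfvx])
    -- (S, ii)
    · have hvx' : idx v ≠ idx x := fun h => hvx (hidL v x hvL hxL h)
      have hwx : idx w = idx x := by omega
      have : w = x := hidL w x hwL hxL hwx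
      exact hfwv (by rw [this, ← hfvx])
    -- (S, iii)
    · have hyw' : idx y ≠ idx w := fun h => hyw (hidL y w hyL hwL h)
      have hvy : idx v = idx y := by omega
      have : v = y := hidL v y hvL hyL hvy
      exact hfwv (by rw [hfwy, ← this])
    -- (ii, S)
    · by_cases hyv : idx y = idx v
      · have : y = v := hidL y v hyL hvL hyv
        exact hfwv (by rw [hfwy, this])
      · have hvx' : idx v ≠ idx x := fun h => hvx (hidL v x hvL hxL h)
        omega
    -- (ii, ii)
    · have hvx' : idx v ≠ idx x := fun h => hvx (hidL v x hvL hxL h)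
      omega
    -- (ii, iii)
    · have hvy : idx v = idx y := by omega
      have : v = y := hidL v y hvL hyL hvy
      exact hfwv (by rw [hfwy, ← this])
    -- (iii, S)
    · by_cases hwy : idx w = idx y
      · exact hyw (hidL y w hyL hwL hwy.symm)
      · have hwx : idx w = idx x := by omega
        have : w = x := hidL w x hwL hxL hwx
        exact hfwv (by rw [this, ← hfvx])
    -- (iii, ii)
    · have hwx : idx w = idx x := by omega
      have : w = x := hidL w x hwL hxL hwx
      exact hfwv (by rw [this, ← hfvx])
    -- (iii, iii)
    · have hwy : idx y = idx w := by omega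
      exact hyw (hidL y w hyL hwL hwy)
  -- the topological ordering σ
  set σ : V → ℕ := fun v =>
    (Finset.univ.filter fun u => f u < f v ∨ (f u = f v ∧ g u < g v)).card with hσdef
  have hσlt : ∀ u v, (f u < f v ∨ (f u = f v ∧ g u < g v)) → σ u < σ v := by
    intro u v h
    apply Finset.card_lt_card
    rw [Finset.ssubset_def]
    constructor
    · intro z hz
      simp only [Finset.mem_filter, Finset.mem_univ, true_and] at hz ⊢
      rcases hz with hz | ⟨hz1, hz2⟩ <;> rcases h with h | ⟨ha, hb⟩
      · left; omega
      · left; omega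
      · left; omega
      · right; constructor <;> omega
    · intro hsub
      have hu : u ∈ Finset.univ.filter
          (fun z => f z < f v ∨ (f z = f v ∧ g z < g v)) := by
        simp only [Finset.mem_filter, Finset.mem_univ, true_and]
        exact h
      have h2 := hsub hu
      rw [Finset.mem_filter] at h2
      refine absurd h2.2 ?_
      push_neg
      exact ⟨le_refl _, fun _ => le_refl _⟩
  have hσinj : Function.Injective σ := by
    intro u v h
    by_contra hne
    have hgne : g u ≠ g v := fun hg => hne (hginj hg)
    have htri : (f u < f v ∨ (f u = f v ∧ g u < g v)) ∨
        (f v < f u ∨ (f v = f u ∧ g v < g u)) := by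
      rcases lt_trichotomy (f u) (f v) with h' | h' | h'
      · exact Or.inl (Or.inl h')
      · rcases lt_trichotomy (g u) (g v) with h'' | h'' | h''
        · exact Or.inl (Or.inr ⟨h', h''⟩)
        · exact absurd h'' hgne
        · exact Or.inr (Or.inr ⟨h'.symm, h''⟩)
      · exact Or.inr (Or.inl h')
    rcases htri with h' | h'
    · exact (Nat.ne_of_lt (hσlt u v h')) h
    · exact (Nat.ne_of_lt (hσlt v u h')) h.symm
  have hσgg : ∀ u v, f u = f v → σ u < σ v → g u < g v := by
    intro u v hf h
    rcases lt_trichotomy (g u) (g v) with h' | h' | h'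
    · exact h'
    · have : u = v := hginj h'
      subst this
      exact absurd h (lt_irrefl _)
    · exact absurd (lt_trans h (hσlt v u (Or.inr ⟨hf.symm, h'⟩))) (lt_irrefl _)
  -- assembling the three layouts
  refine ⟨⟨f, g, ?_, ?_, hcross, fun v w h => by have := hfA v w h; omega⟩, ?_, ?_⟩
  · exact fun v w h => Ne.symm (hf_ne v w h)
  · exact fun v w hne _ hg => hne (hginj hg)
  · -- upward 3-track layout
    refine ⟨fun v => ⟨(f v % 3).toNat, by omega⟩, σ, ?_, ?_, ?_,
      σ, hσinj, fun v w h => hσlt v w (Or.inl (by have := hfA v w h; omega)),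
      fun v w _ h => h⟩
    · intro v w h hc
      have h3 : (f v % 3).toNat = (f w % 3).toNat := congrArg Fin.val hc
      rcases hf_pm v w h with h' | h' <;> omega
    · exact fun v w hne _ h => hne (hσinj h)
    · rintro v w x y hvw hxy h1 h2 ⟨hs1, hs2⟩
      have e1 : (f v % 3).toNat = (f x % 3).toNat := congrArg Fin.val h1
      have e2 : (f w % 3).toNat = (f y % 3).toNat := congrArg Fin.val h2
      have d1 := hf_pm v w hvw
      have d2 := hf_pm x y hxy
      rcases lt_trichotomy (f v) (f x) with h' | h' | h'
      · have hlt : f w < f y := by omega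
        exact absurd (lt_trans (hσlt w y (Or.inl hlt)) hs2) (lt_irrefl _)
      · have hwy : f w = f y := by omega
        exact hcross v w x y hvw hxy h' hwy ⟨hσgg v x h' hs1, hσgg y w hwy.symm hs2⟩
      · exact absurd (lt_trans hs1 (hσlt x v (Or.inl h'))) (lt_irrefl _)
  · -- upward 1-queue layout
    refine ⟨σ, hσinj, fun v w h => hσlt v w (Or.inl (by have := hfA v w h; omega)), ?_⟩
    rintro v w x y hvw hxy ⟨hs1, hs2⟩
    have d1 := hfA v w hvw
    have d2 := hfA x y hxy
    rcases lt_trichotomy (f v) (f x) with h' | h' | h'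
    · exact absurd (lt_trans (hσlt w y (Or.inl (by omega))) hs2) (lt_irrefl _)
    · exact hcross v w x y (hor _ _ hvw) (hor _ _ hxy) h' (by omega)
        ⟨hσgg v x h' hs1, hσgg y w (by omega) hs2⟩
    · exact absurd (lt_trans hs1 (hσlt x v (Or.inl h'))) (lt_irrefl _)
end

section
/- Let T be a tree that is not a caterpillar, i.e., T contains a 2-claw. Then there exists an acyclic orientation of T admitting no track layout {V_i : i ∈ ℤ} with the property that every arc (v,w) with v ∈ V_i has w ∈ V_{i+1}. -/
/-- If a tree `G` contains a 2-claw (so is not a caterpillar), then some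
acyclic orientation of `G` admits no track layout indexed by `ℤ` in which every
arc goes from some track `V_i` to the next track `V_{i+1}`. -/
theorem non_caterpillar_no_span_one_layout {V : Type*} (G : SimpleGraph V)
    (hT : G.IsTree) (r u v w x y z : V)
    (hnodup : ([r, u, v, w, x, y, z] : List V).Nodup)
    (h1 : G.Adj r u) (h2 : G.Adj r v) (h3 : G.Adj r w)
    (h4 : G.Adj u x) (h5 : G.Adj v y) (h6 : G.Adj w z) :
    ∃ A : V → V → Prop,
      (∀ a b, A a b → G.Adj a b) ∧
      (∀ a b, G.Adj a b → (A a b ↔ ¬ A b a)) ∧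
      ¬ ∃ (f : V → ℤ) (g : V → ℕ),
        (∀ a b, G.Adj a b → f a ≠ f b) ∧
        (∀ a b, a ≠ b → f a = f b → g a ≠ g b) ∧
        (∀ a b p q, G.Adj a b → G.Adj p q → f a = f p → f b = f q →
          ¬ (g a < g p ∧ g q < g b)) ∧
        (∀ a b, A a b → f b = f a + 1) := by
  classical
  simp only [List.nodup_cons, List.mem_cons, List.mem_singleton, List.not_mem_nil,
    or_false, not_or, List.nodup_nil, and_true] at hnodup
  obtain ⟨⟨hru, hrv, hrw, hrx, hry, hrz⟩, ⟨huv, huw, hux, huy, huz⟩,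
    ⟨hvw, hvx, hvy, hvz⟩, ⟨hwx, hwy, hwz⟩, ⟨hxy, hxz⟩, hyz⟩ := hnodup
  -- the special arcs
  set S : V → V → Prop := fun a b =>
    (a = r ∧ (b = u ∨ b = v ∨ b = w)) ∨ (a = x ∧ b = u) ∨ (a = y ∧ b = v) ∨
      (a = z ∧ b = w) with hSdef
  have hSfst : ∀ a b, S a b → a = r ∨ a = x ∨ a = y ∨ a = z := by
    rintro a b (⟨rfl, _⟩ | ⟨rfl, _⟩ | ⟨rfl, _⟩ | ⟨rfl, _⟩) <;> tauto
  have hSsnd : ∀ a b, S a b → b = u ∨ b = v ∨ b = w := by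
    rintro a b (⟨_, rfl | rfl | rfl⟩ | ⟨_, rfl⟩ | ⟨_, rfl⟩ | ⟨_, rfl⟩) <;> tauto
  have hSasymm : ∀ a b, S a b → ¬ S b a := by
    intro a b hab hba
    rcases hSfst a b hab with rfl | rfl | rfl | rfl <;>
      rcases hSsnd b a hba with h | h | h <;> simp_all
  refine ⟨fun a b => G.Adj a b ∧ (S a b ∨ (¬ S a b ∧ ¬ S b a ∧ WellOrderingRel a b)),
    fun a b h => h.1, ?_, ?_⟩
  · intro a b hadj
    constructor
    · rintro ⟨-, hab⟩ ⟨-, hba⟩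
      rcases hab with hab | ⟨hnab, hnba, hlt⟩
      · rcases hba with hba | ⟨_, hnab, _⟩
        · exact hSasymm a b hab hba
        · exact hnab hab
      · rcases hba with hba | ⟨_, _, hlt'⟩
        · exact hnba hba
        · exact asymm (r := WellOrderingRel) hlt hlt'
    · intro hn
      refine ⟨hadj, ?_⟩
      by_cases hab : S a b
      · exact Or.inl hab
      by_cases hba : S b a
      · exact absurd ⟨hadj.symm, Or.inl hba⟩ hn
      refine Or.inr ⟨hab, hba, ?_⟩
      rcases trichotomous_of WellOrderingRel a b with h | h | h
      · exact h
      · exact absurd h hadj.ne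
      · exact absurd ⟨hadj.symm, Or.inr ⟨hba, hab, h⟩⟩ hn
  · rintro ⟨f, g, hneq, hinj, hcross, harc⟩
    have hAru : f u = f r + 1 := harc r u ⟨h1, Or.inl (Or.inl ⟨rfl, Or.inl rfl⟩)⟩
    have hArv : f v = f r + 1 := harc r v ⟨h2, Or.inl (Or.inl ⟨rfl, Or.inr (Or.inl rfl)⟩)⟩
    have hArw : f w = f r + 1 := harc r w ⟨h3, Or.inl (Or.inl ⟨rfl, Or.inr (Or.inr rfl)⟩)⟩
    have hAxu : f u = f x + 1 := harc x u ⟨h4.symm, Or.inl (Or.inr (Or.inl ⟨rfl, rfl⟩))⟩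
    have hAyv : f v = f y + 1 := harc y v ⟨h5.symm, Or.inl (Or.inr (Or.inr (Or.inl ⟨rfl, rfl⟩)))⟩
    have hAzw : f w = f z + 1 := harc z w ⟨h6.symm, Or.inl (Or.inr (Or.inr (Or.inr ⟨rfl, rfl⟩)))⟩
    have hfx : f x = f r := by omega
    have hfy : f y = f r := by omega
    have hfz : f z = f r := by omega
    -- key lemma: two leaves on the same side of r give an X-crossing
    have keyL : ∀ p s q t : V, G.Adj p s → G.Adj q t → G.Adj r s → G.Adj r t →
        f p = f r → f q = f r → f s = f r + 1 → f t = f r + 1 → s ≠ t →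
        g p < g r → g q < g r → False := by
      intro p s q t hps hqt hrs hrt hfp hfq hfs hft hst hp hq
      have c1 := hcross q t r s hqt hrs (by omega) (by omega)
      have c2 := hcross p s r t hps hrt (by omega) (by omega)
      have hgst := hinj s t hst (by omega)
      omega
    have keyR : ∀ p s q t : V, G.Adj p s → G.Adj q t → G.Adj r s → G.Adj r t →
        f p = f r → f q = f r → f s = f r + 1 → f t = f r + 1 → s ≠ t →
        g r < g p → g r < g q → False := by
      intro p s q t hps hqt hrs hrt hfp hfq hfs hft hst hp hq
      have c1 := hcross r s q t hrs hqt (by omega) (by omega)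
      have c2 := hcross r t p s hrt hps (by omega) (by omega)
      have hgst := hinj s t hst (by omega)
      omega
    have hgx := (hinj x r (Ne.symm hrx) hfx).lt_or_gt
    have hgy := (hinj y r (Ne.symm hry) hfy).lt_or_gt
    have hgz := (hinj z r (Ne.symm hrz) hfz).lt_or_gt
    rcases hgx with hgx | hgx <;> rcases hgy with hgy | hgy <;> rcases hgz with hgz | hgz
    · exact keyL x u y v h4.symm h5.symm h1 h2 hfx hfy hAru hArv huv hgx hgy
    · exact keyL x u y v h4.symm h5.symm h1 h2 hfx hfy hAru hArv huv hgx hgy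
    · exact keyL x u z w h4.symm h6.symm h1 h3 hfx hfz hAru hArw huw hgx hgz
    · exact keyR y v z w h5.symm h6.symm h2 h3 hfy hfz hArv hArw hvw hgy hgz
    · exact keyL y v z w h5.symm h6.symm h2 h3 hfy hfz hArv hArw hvw hgy hgz
    · exact keyR x u z w h4.symm h6.symm h1 h3 hfx hfz hAru hArw huw hgx hgz
    · exact keyR x u y v h4.symm h5.symm h1 h2 hfx hfy hAru hArv huv hgx hgy
    · exact keyR x u y v h4.symm h5.symm h1 h2 hfx hfy hAru hArv huv hgx hgy
end

section
/- Let G_n be the dag with vertices u_1,...,u_{2n}, arcs (u_i, u_{i+1}) for 1 ≤ i ≤ 2n−1, and arcs (u_i, u_{2n−i+1}) for 1 ≤ i ≤ n. Then (u_1, u_2, ..., u_{2n}) is the unique topological ordering of G_n, the n arcs (u_i, u_{2n−i+1}) are pairwise nested in this ordering, and consequently the upward queue-number of G_n is at least n. -/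
/-- The arcs of the dag `G_n` on vertices `0,…,2n-1` (0-indexed version of
`u_1,…,u_{2n}`): arcs `(i, i+1)` and arcs `(i, 2n-1-i)` for `i < n`. -/
def GnArc (n : ℕ) (a b : Fin (2 * n)) : Prop :=
  ((b : ℕ) = (a : ℕ) + 1) ∨ ((a : ℕ) < n ∧ (b : ℕ) = 2 * n - 1 - (a : ℕ))

/-- Auxiliary: respecting the successor arcs forces strict monotonicity. -/
lemma chain_mono {α : Type*} [Preorder α] {m : ℕ} (σ : Fin m → α)
    (h : ∀ a b : Fin m, (b : ℕ) = (a : ℕ) + 1 → σ a < σ b) :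
    ∀ a b : Fin m, (a : ℕ) < (b : ℕ) → σ a < σ b := by
  have key : ∀ k (a b : Fin m), (b : ℕ) = (a : ℕ) + k + 1 → σ a < σ b := by
    intro k
    induction k with
    | zero => intro a b hb; exact h a b (by omega)
    | succ k ih =>
        intro a b hb
        have hc : (a : ℕ) + k + 1 < m := by have := b.isLt; omega
        exact lt_trans (ih a ⟨(a : ℕ) + k + 1, hc⟩ rfl) (h ⟨_, hc⟩ b (by simp; omega))
  intro a b hab
  exact key ((b : ℕ) - (a : ℕ) - 1) a b (by omega)

/-- The identity is the unique topological ordering of `G_n`, the `n` arcs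
`(i, 2n-1-i)` are pairwise nested in it, and consequently the upward
queue-number of `G_n` is at least `n`. -/
theorem Gn_upward_queue_number_lower_bound (n : ℕ) (hn : 1 ≤ n) :
    (∀ σ : Fin (2 * n) ≃ Fin (2 * n),
      (∀ a b, GnArc n a b → σ a < σ b) → σ = Equiv.refl _) ∧
    (∀ i j : Fin (2 * n), (i : ℕ) < (j : ℕ) → (j : ℕ) < n →
      (i : ℕ) < (j : ℕ) ∧ (j : ℕ) < 2 * n - 1 - (j : ℕ) ∧
        2 * n - 1 - (j : ℕ) < 2 * n - 1 - (i : ℕ)) ∧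
    (∀ (k : ℕ) (σ : Fin (2 * n) → ℕ) (q : ∀ a b, GnArc n a b → Fin k),
      Function.Injective σ →
      (∀ a b, GnArc n a b → σ a < σ b) →
      (∀ a b x y (h1 : GnArc n a b) (h2 : GnArc n x y),
        q a b h1 = q x y h2 → ¬ (σ a < σ x ∧ σ y < σ b)) →
      n ≤ k) := by
  refine ⟨?_, ?_, ?_⟩
  · intro σ hord
    have hsm : StrictMono σ := by
      intro a b hab
      exact chain_mono σ (fun a b hb => hord a b (Or.inl hb)) a b hab
    have hsm2 : StrictMono σ.symm := by
      intro a b hab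
      rcases lt_trichotomy (σ.symm a) (σ.symm b) with h | h | h
      · exact h
      · exact absurd (congrArg σ h) (by simp; exact ne_of_lt hab)
      · have := hsm h
        simp at this
        exact absurd hab (not_lt_of_gt this)
    ext i
    have h1 : i ≤ σ i := @StrictMono.le_apply (Fin (2*n)) inferInstance (inferInstance : WellFoundedLT (Fin (2*n))) _ hsm (x := i)
    have h2 : σ i ≤ i := by
      have := @StrictMono.le_apply (Fin (2*n)) inferInstance (inferInstance : WellFoundedLT (Fin (2*n))) _ hsm2 (x := σ i)
      simpa using this
    exact congrArg Fin.val (le_antisymm h2 h1)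
  · intro i j hij hjn
    exact ⟨hij, by omega, by omega⟩
  · intro k σ q hinj hord hnest
    have hmono : ∀ a b : Fin (2 * n), (a : ℕ) < (b : ℕ) → σ a < σ b :=
      chain_mono σ (fun a b hb => hord a b (Or.inl hb))
    have hv : ∀ i : Fin n, (i : ℕ) < 2 * n := fun i => by have := i.isLt; omega
    have hw : ∀ i : Fin n, 2 * n - 1 - (i : ℕ) < 2 * n := fun i => by
      have := i.isLt; omega
    let f : Fin n → Fin k := fun i =>
      q ⟨i, hv i⟩ ⟨2 * n - 1 - (i : ℕ), hw i⟩ (Or.inr ⟨i.isLt, rfl⟩)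
    have hf : Function.Injective f := by
      intro i j hfij
      by_contra hne
      have key : ∀ i j : Fin n, (i : ℕ) < (j : ℕ) → f i ≠ f j := by
        intro i j hij heq
        exact hnest _ _ _ _ _ _ heq
          ⟨hmono _ _ hij, hmono _ _ (by have := j.isLt; have := i.isLt; simp; omega)⟩
      rcases lt_trichotomy (i : ℕ) (j : ℕ) with h | h | h
      · exact key i j h hfij
      · exact hne (Fin.ext h)
      · exact key j i h hfij.symm
    simpa using Fintype.card_le_of_injective f hf
end

section
/- Every dag G with a topological vertex ordering of bandwidth b has a subdivision, with at most ⌈(b−1)/2⌉ division vertices per arc, that admits an upward 2-queue layout. -/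
namespace BWQ

lemma digit_lt {k c C : ℕ} (hk : k < C) (hc : c < C) : k * C + c < C ^ 2 := by
  calc k * C + c < k * C + C := Nat.add_lt_add_left hc _
    _ = (k + 1) * C := by ring
    _ ≤ C * C := Nat.mul_le_mul_right C hk
    _ = C ^ 2 := (pow_two C).symm

lemma digit_mono {k c k' c' C : ℕ} (hc : c < C) (hkk : k < k') :
    k * C + c < k' * C + c' := by
  have h1 : k * C + c < (k + 1) * C := by
    calc k * C + c < k * C + C := Nat.add_lt_add_left hc _
      _ = (k + 1) * C := by ring
  have h2 : (k + 1) * C ≤ k' * C := Nat.mul_le_mul_right C hkk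
  exact lt_of_lt_of_le (lt_of_lt_of_le h1 h2) (Nat.le_add_right _ _)

lemma lex_mono {C p k c p' k' c' : ℕ} (hk : k < C) (hc : c < C) (hp : p < p') :
    p * C ^ 2 + (k * C + c) < p' * C ^ 2 + (k' * C + c') := by
  have h1 : p * C ^ 2 + (k * C + c) < (p + 1) * C ^ 2 := by
    calc p * C ^ 2 + (k * C + c) < p * C ^ 2 + C ^ 2 :=
          Nat.add_lt_add_left (digit_lt hk hc) _
      _ = (p + 1) * C ^ 2 := by ring
  have h2 : (p + 1) * C ^ 2 ≤ p' * C ^ 2 := Nat.mul_le_mul_right _ hp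
  exact lt_of_lt_of_le (lt_of_lt_of_le h1 h2) (Nat.le_add_right _ _)

lemma lex_lt {C p k c p' k' c' : ℕ} (hk : k < C) (hc : c < C) (hk' : k' < C) (hc' : c' < C)
    (h : p * C ^ 2 + (k * C + c) < p' * C ^ 2 + (k' * C + c')) :
    p < p' ∨ (p = p' ∧ (k < k' ∨ (k = k' ∧ c < c'))) := by
  rcases lt_trichotomy p p' with hp | hp | hp
  · exact Or.inl hp
  · subst hp
    right; refine ⟨rfl, ?_⟩
    have h' : k * C + c < k' * C + c' := Nat.lt_of_add_lt_add_left h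
    rcases lt_trichotomy k k' with hkk | hkk | hkk
    · exact Or.inl hkk
    · subst hkk
      exact Or.inr ⟨rfl, Nat.lt_of_add_lt_add_left h'⟩
    · exact absurd h' (Nat.lt_asymm (digit_mono hc' hkk))
  · exact absurd h (Nat.lt_asymm (lex_mono hk' hc' hp))

lemma digits_eq {C p k c p' k' c' : ℕ} (hk : k < C) (hc : c < C) (hk' : k' < C) (hc' : c' < C)
    (h : p * C ^ 2 + (k * C + c) = p' * C ^ 2 + (k' * C + c')) :
    p = p' ∧ k = k' ∧ c = c' := by
  rcases lt_trichotomy p p' with hp | hp | hp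
  · have h2 := lex_mono (k' := k') (c' := c') hk hc hp
    rw [h] at h2; exact absurd h2 (lt_irrefl _)
  · subst hp
    have h1 : k * C + c = k' * C + c' := Nat.add_left_cancel h
    rcases lt_trichotomy k k' with hkk | hkk | hkk
    · have h2 := digit_mono (c' := c') hc hkk
      rw [h1] at h2; exact absurd h2 (lt_irrefl _)
    · subst hkk
      exact ⟨rfl, rfl, Nat.add_left_cancel h1⟩
    · have h2 := digit_mono (c' := c) hc' hkk
      rw [← h1] at h2; exact absurd h2 (lt_irrefl _)
  · have h2 := lex_mono (k' := k) (c' := c) hk' hc' hp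
    rw [← h] at h2; exact absurd h2 (lt_irrefl _)

lemma zipChain {α : Type*} : ∀ (n : ℕ) (f : ℕ → α),
    ((f 0 :: (List.range n).map fun i => f (i+1))).zip ((List.range n).map fun i => f (i+1))
      = (List.range n).map fun i => (f i, f (i+1))
  | 0, f => by simp
  | (n+1), f => by
    have e1 : (List.range (n+1)).map (fun i => f (i+1))
        = f 1 :: (List.range n).map (fun i => f (i+2)) := by
      rw [List.range_succ_eq_map]
      simp [List.map_map, Function.comp]
    have e2 : (List.range (n+1)).map (fun i => (f i, f (i+1)))
        = (f 0, f 1) :: (List.range n).map (fun i => (f (i+1), f (i+2))) := by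
      rw [List.range_succ_eq_map]
      simp [List.map_map, Function.comp]
    rw [e1, e2, List.zip_cons_cons]
    congr 1
    have h3 := zipChain n (fun i => f (i+1))
    exact h3



section Defs

variable {V : Type*} (Arc : V → V → Prop) (σ₀ : V → ℕ) (b : ℕ)

/-- number of division vertices on arc `(v,w)`. -/
def nd (v w : V) : ℕ := (σ₀ w - σ₀ v - 1) / 2

/-- codes of division vertices -/
def WP (t : ℕ × ℕ × ℕ) : Prop :=
  ∃ v w, Arc v w ∧ t.1 = σ₀ v ∧ t.2.1 = σ₀ w ∧ t.2.2 < nd σ₀ v w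

def Wt : Type := {t : ℕ × ℕ × ℕ // WP Arc σ₀ t}

def mk (v w : V) (j : ℕ) (h : Arc v w) (hj : j < nd σ₀ v w) : Wt Arc σ₀ :=
  ⟨(σ₀ v, σ₀ w, j), v, w, h, rfl, rfl, hj⟩

def PL (v w : V) (h : Arc v w) : List (Wt Arc σ₀) :=
  (List.range (nd σ₀ v w)).pmap (fun j hj => mk Arc σ₀ v w j h hj)
    (fun j hj => List.mem_range.mp hj)

def ch (v w : V) (h : Arc v w) : ℕ → V ⊕ Wt Arc σ₀ := fun i =>
  match i with
  | 0 => Sum.inl v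
  | (j+1) => if hj : j < nd σ₀ v w then Sum.inr (mk Arc σ₀ v w j h hj) else Sum.inl w

def posf : V ⊕ Wt Arc σ₀ → ℕ
  | Sum.inl x => σ₀ x
  | Sum.inr t => t.val.1 + 2 * t.val.2.2 + (2 - (t.val.2.1 - t.val.1) % 2)

def kapf : V ⊕ Wt Arc σ₀ → ℕ
  | Sum.inl _ => b + 1
  | Sum.inr t =>
      if (t.val.2.1 - t.val.1) % 2 = 1 then
        (b + 1) + ((t.val.2.1 - t.val.1) - 2 * t.val.2.2 - 1) / 2
      else
        (b + 1) - ((t.val.2.1 - t.val.1) - 2 * t.val.2.2 - 2) / 2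

def k3f : V ⊕ Wt Arc σ₀ → ℕ
  | Sum.inl _ => 0
  | Sum.inr t => t.val.1 + 1

def tauf (C : ℕ) (n : V ⊕ Wt Arc σ₀) : ℕ :=
  posf Arc σ₀ n * C ^ 2 + (kapf Arc σ₀ b n * C + k3f Arc σ₀ n)

/-- spec of first segments (tail is an original vertex). -/
def SpecF (v w : V) (y : V ⊕ Wt Arc σ₀) : Prop :=
  σ₀ v + 1 ≤ posf Arc σ₀ y ∧ posf Arc σ₀ y ≤ σ₀ v + 2 ∧
  (posf Arc σ₀ y = σ₀ v + 1 → b + 1 ≤ kapf Arc σ₀ b y) ∧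
  (posf Arc σ₀ y = σ₀ v + 2 → kapf Arc σ₀ b y ≤ b + 1) ∧
  (kapf Arc σ₀ b y = b + 1 → y = Sum.inl w ∧ posf Arc σ₀ y = σ₀ w)

/-- spec of later segments (tail is a division vertex). -/
def SpecM (v w : V) (x y : V ⊕ Wt Arc σ₀) : Prop :=
  ∃ rr, 1 ≤ rr ∧ rr ≤ b ∧ σ₀ w = posf Arc σ₀ x + 2 * rr ∧
    posf Arc σ₀ y = posf Arc σ₀ x + 2 ∧
    k3f Arc σ₀ x = σ₀ v + 1 ∧
    ((kapf Arc σ₀ b x = (b + 1) + rr ∧ kapf Arc σ₀ b y + 1 = (b + 1) + rr) ∨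
      (kapf Arc σ₀ b x + rr = b + 1 ∧ kapf Arc σ₀ b y + rr = b + 2)) ∧
    (kapf Arc σ₀ b y = b + 1 → y = Sum.inl w ∧ posf Arc σ₀ y = σ₀ w) ∧
    (kapf Arc σ₀ b y ≠ b + 1 → k3f Arc σ₀ y = σ₀ v + 1)

end Defs

section Lemmas

variable {V : Type*} (Arc : V → V → Prop) (σ₀ : V → ℕ) (b : ℕ)

lemma tail_eq (v w : V) (h : Arc v w) :
    (PL Arc σ₀ v w h).map Sum.inr ++ [Sum.inl w]
      = (List.range (nd σ₀ v w + 1)).map (fun i => ch Arc σ₀ v w h (i + 1)) := by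
  rw [List.range_succ, List.map_append]
  congr 1
  · rw [PL, List.map_pmap,
      ← List.pmap_eq_map (p := fun j => j < nd σ₀ v w) (f := fun i => ch Arc σ₀ v w h (i + 1))
        (l := List.range (nd σ₀ v w)) (fun j hj => List.mem_range.mp hj)]
    apply List.pmap_congr_left
    intro a _ h1 _
    rw [ch]
    rw [dif_pos h1]
  · have e : ch Arc σ₀ v w h (nd σ₀ v w + 1) = Sum.inl w := by
      rw [ch]
      rw [dif_neg (lt_irrefl _)]
    simp [e]

lemma memB_iff (v w : V) (h : Arc v w) (x y : V ⊕ Wt Arc σ₀) :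
    ((x, y) ∈ (Sum.inl v :: ((PL Arc σ₀ v w h).map Sum.inr ++ [Sum.inl w])).zip
        ((PL Arc σ₀ v w h).map Sum.inr ++ [Sum.inl w]))
    ↔ ∃ i, i ≤ nd σ₀ v w ∧ x = ch Arc σ₀ v w h i ∧ y = ch Arc σ₀ v w h (i + 1) := by
  rw [tail_eq]
  have h0 : (Sum.inl v : V ⊕ Wt Arc σ₀) = ch Arc σ₀ v w h 0 := rfl
  rw [h0, zipChain]
  simp only [List.mem_map, List.mem_range, Nat.lt_succ_iff]
  constructor
  · rintro ⟨i, hi, he⟩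
    exact ⟨i, hi, (Prod.ext_iff.mp he).1.symm, (Prod.ext_iff.mp he).2.symm⟩
  · rintro ⟨i, hi, rfl, rfl⟩
    exact ⟨i, hi, rfl⟩

lemma node_facts (htopo : ∀ v w, Arc v w → σ₀ v < σ₀ w)
    (hband : ∀ v w, Arc v w → σ₀ w ≤ σ₀ v + b) (t : Wt Arc σ₀) :
    ∃ v w rr, Arc v w ∧ t.val.1 = σ₀ v ∧ t.val.2.1 = σ₀ w ∧
      σ₀ v < σ₀ w ∧ σ₀ w ≤ σ₀ v + b ∧ 1 ≤ rr ∧ rr ≤ b ∧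
      σ₀ w = posf Arc σ₀ (Sum.inr t) + 2 * rr ∧
      k3f Arc σ₀ (Sum.inr t) = σ₀ v + 1 ∧
      (kapf Arc σ₀ b (Sum.inr t) = (b + 1) + rr ∨ kapf Arc σ₀ b (Sum.inr t) + rr = b + 1) ∧
      posf Arc σ₀ (Sum.inr t) = σ₀ v + 2 * t.val.2.2 + (2 - (σ₀ w - σ₀ v) % 2) ∧
      t.val.2.2 < nd σ₀ v w := by
  obtain ⟨v, w, harc, e1, e2, hj⟩ := t.2
  have h1 := htopo v w harc
  have h2 := hband v w harc
  have hj' : t.val.2.2 < (σ₀ w - σ₀ v - 1) / 2 := hj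
  refine ⟨v, w, (σ₀ w - σ₀ v - 2 * t.val.2.2 - 2 + (σ₀ w - σ₀ v) % 2) / 2,
    harc, e1, e2, h1, h2, ?_, ?_, ?_, ?_, ?_, ?_, hj⟩
  · omega
  · omega
  · simp only [posf, e1, e2]
    omega
  · simp only [k3f, e1]
  · simp only [kapf, e1, e2]
    rcases Nat.mod_two_eq_zero_or_one (σ₀ w - σ₀ v) with hp | hp
    · rw [if_neg (by omega)]
      right
      omega
    · rw [if_pos hp]
      left
      omega
  · simp only [posf, e1, e2]

end Lemmas
section Seg

variable {V : Type*} (Arc : V → V → Prop) (σ₀ : V → ℕ) (b : ℕ)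

lemma spec_seg (htopo : ∀ v w, Arc v w → σ₀ v < σ₀ w)
    (hband : ∀ v w, Arc v w → σ₀ w ≤ σ₀ v + b)
    (v w : V) (h : Arc v w) (i : ℕ) (hi : i ≤ nd σ₀ v w) :
    (ch Arc σ₀ v w h i = Sum.inl v ∧ SpecF Arc σ₀ b v w (ch Arc σ₀ v w h (i + 1)))
    ∨ ((∃ t, ch Arc σ₀ v w h i = Sum.inr t) ∧
        SpecM Arc σ₀ b v w (ch Arc σ₀ v w h i) (ch Arc σ₀ v w h (i + 1))) := by
  have h1 := htopo v w h
  have h2 := hband v w h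
  cases i with
  | zero =>
    left
    refine ⟨rfl, ?_⟩
    by_cases h0 : 0 < nd σ₀ v w
    · have e : ch Arc σ₀ v w h 1 = Sum.inr (mk Arc σ₀ v w 0 h h0) := by
        rw [ch]; rw [dif_pos h0]
      rw [e]
      unfold SpecF
      simp only [posf, kapf, k3f, mk]
      have h0' : 0 < (σ₀ w - σ₀ v - 1) / 2 := h0
      rcases Nat.mod_two_eq_zero_or_one (σ₀ w - σ₀ v) with hp | hp
      · erw [if_neg (show ¬ (σ₀ w - σ₀ v) % 2 = 1 by omega)]
        refine ⟨by omega, by omega, by omega, by omega, ?_⟩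
        intro hN; exact absurd hN (by omega)
      · erw [if_pos (show (σ₀ w - σ₀ v) % 2 = 1 by omega)]
        refine ⟨by omega, by omega, by omega, by omega, ?_⟩
        intro hN; exact absurd hN (by omega)
    · have e : ch Arc σ₀ v w h 1 = Sum.inl w := by
        rw [ch]; rw [dif_neg h0]
      rw [e]
      unfold SpecF
      simp only [posf, kapf]
      have h0' : ¬ 0 < (σ₀ w - σ₀ v - 1) / 2 := h0
      exact ⟨by omega, by omega, fun _ => le_refl _, fun _ => le_refl _, fun _ => ⟨by trivial, by trivial⟩⟩
  | succ i =>
    right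
    have hi' : i < nd σ₀ v w := hi
    have hnd : i < (σ₀ w - σ₀ v - 1) / 2 := hi'
    have ex : ch Arc σ₀ v w h (i + 1) = Sum.inr (mk Arc σ₀ v w i h hi') := by
      rw [ch]; rw [dif_pos hi']
    refine ⟨⟨_, ex⟩, ?_⟩
    unfold SpecM
    by_cases hy : i + 1 < nd σ₀ v w
    · have hy' : i + 1 < (σ₀ w - σ₀ v - 1) / 2 := hy
      have ey : ch Arc σ₀ v w h (i + 1 + 1) = Sum.inr (mk Arc σ₀ v w (i + 1) h hy) := by
        rw [ch]; rw [dif_pos hy]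
      rw [ex, ey]
      refine ⟨(σ₀ w - σ₀ v - 2 * i - 2 + (σ₀ w - σ₀ v) % 2) / 2,
        by omega, by omega, ?_, ?_, ?_, ?_, ?_, ?_⟩
      · simp only [posf, mk]; omega
      · simp only [posf, mk]; omega
      · simp only [k3f, mk]
      · simp only [kapf, mk]
        rcases Nat.mod_two_eq_zero_or_one (σ₀ w - σ₀ v) with hp | hp
        · erw [if_neg (show ¬ (σ₀ w - σ₀ v) % 2 = 1 by omega), if_neg (show ¬ (σ₀ w - σ₀ v) % 2 = 1 by omega)]
          right
          constructor <;> omega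
        · erw [if_pos (show (σ₀ w - σ₀ v) % 2 = 1 by omega), if_pos (show (σ₀ w - σ₀ v) % 2 = 1 by omega)]
          left
          constructor <;> omega
      · simp only [kapf, mk]
        rcases Nat.mod_two_eq_zero_or_one (σ₀ w - σ₀ v) with hp | hp
        · erw [if_neg (show ¬ (σ₀ w - σ₀ v) % 2 = 1 by omega)]
          intro hN; exact absurd hN (by omega)
        · erw [if_pos (show (σ₀ w - σ₀ v) % 2 = 1 by omega)]
          intro hN; exact absurd hN (by omega)
      · intro _
        simp only [k3f, mk]
    · have hnd2 : nd σ₀ v w = i + 1 := by omega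
      have hnd2' : (σ₀ w - σ₀ v - 1) / 2 = i + 1 := hnd2
      have ey : ch Arc σ₀ v w h (i + 1 + 1) = Sum.inl w := by
        rw [ch]; rw [dif_neg (by omega : ¬ i + 1 < nd σ₀ v w)]
      rw [ex, ey]
      refine ⟨(σ₀ w - σ₀ v - 2 * i - 2 + (σ₀ w - σ₀ v) % 2) / 2,
        by omega, by omega, ?_, ?_, ?_, ?_, ?_, ?_⟩
      · simp only [posf, mk]; omega
      · simp only [posf, mk]; omega
      · simp only [k3f, mk]
      · simp only [kapf, mk]
        rcases Nat.mod_two_eq_zero_or_one (σ₀ w - σ₀ v) with hp | hp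
        · erw [if_neg (show ¬ (σ₀ w - σ₀ v) % 2 = 1 by omega)]
          right
          constructor <;> omega
        · erw [if_pos (show (σ₀ w - σ₀ v) % 2 = 1 by omega)]
          left
          constructor <;> omega
      · intro _
        exact ⟨rfl, rfl⟩
      · intro hN
        exact absurd rfl hN
end Seg
section Glue

variable {V : Type*} (Arc : V → V → Prop) (σ₀ : V → ℕ) (b : ℕ)

lemma spec_of_B (htopo : ∀ v w, Arc v w → σ₀ v < σ₀ w)
    (hband : ∀ v w, Arc v w → σ₀ w ≤ σ₀ v + b) {x y : V ⊕ Wt Arc σ₀}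
    (hB : ∃ (v w : V) (h : Arc v w),
      (x, y) ∈ (Sum.inl v :: ((PL Arc σ₀ v w h).map Sum.inr ++ [Sum.inl w])).zip
        ((PL Arc σ₀ v w h).map Sum.inr ++ [Sum.inl w])) :
    (∃ v w, Arc v w ∧ x = Sum.inl v ∧ SpecF Arc σ₀ b v w y) ∨
    (∃ v w t, Arc v w ∧ x = Sum.inr t ∧ SpecM Arc σ₀ b v w x y) := by
  obtain ⟨v, w, h, hm⟩ := hB
  rw [memB_iff] at hm
  obtain ⟨i, hi, rfl, rfl⟩ := hm
  rcases spec_seg Arc σ₀ b htopo hband v w h i hi with ⟨e0, sf⟩ | ⟨⟨t, et⟩, sm⟩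
  · exact Or.inl ⟨v, w, h, e0, sf⟩
  · exact Or.inr ⟨v, w, t, h, et, sm⟩

end Glue

end BWQ


/-- Every dag with a topological ordering of bandwidth at most `b` has a
subdivision, with at most `⌈(b-1)/2⌉` division vertices per arc, that admits an
upward 2-queue layout. -/
theorem bandwidth_subdivision_two_queue {V : Type*} [Fintype V]
    (A : V → V → Prop) (b : ℕ)
    (σ₀ : V → ℕ) (hσinj : Function.Injective σ₀)
    (htopo : ∀ v w, A v w → σ₀ v < σ₀ w)
    (hband : ∀ v w, A v w → σ₀ w ≤ σ₀ v + b) :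
    ∃ (W : Type) (_ : Fintype W) (P : ∀ v w, A v w → List W)
      (B : (V ⊕ W) → (V ⊕ W) → Prop),
      -- at most ⌈(b-1)/2⌉ division vertices per arc
      (∀ v w (h : A v w), (P v w h).length ≤ (b - 1 + 1) / 2) ∧
      -- division vertices along one arc are distinct
      (∀ v w (h : A v w), (P v w h).Nodup) ∧
      -- distinct arcs get disjoint sets of division vertices
      (∀ v w x y (h1 : A v w) (h2 : A x y), (v, w) ≠ (x, y) →
        ∀ d, d ∈ P v w h1 → d ∉ P x y h2) ∧
      -- every division vertex is used
      (∀ d : W, ∃ (v w : V) (h : A v w), d ∈ P v w h) ∧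
      -- B is the subdivision: each arc (v,w) is replaced by the directed path
      -- inl v :: map inr (P v w h) ++ [inl w]
      (∀ x y, B x y ↔ ∃ (v w : V) (h : A v w),
        (x, y) ∈ (Sum.inl v :: ((P v w h).map Sum.inr ++ [Sum.inl w])).zip
          ((P v w h).map Sum.inr ++ [Sum.inl w])) ∧
      -- the subdivision has an upward 2-queue layout
      (∃ (τ : V ⊕ W → ℕ) (q : ∀ x y, B x y → Fin 2),
        Function.Injective τ ∧ (∀ x y, B x y → τ x < τ y) ∧
        ∀ x y x' y' (h1 : B x y) (h2 : B x' y'), q x y h1 = q x' y' h2 →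
          ¬ (τ x < τ x' ∧ τ y' < τ y)) := by
  classical
  set S : ℕ := Finset.univ.sup σ₀ + 1 with hSdef
  have hS : ∀ v : V, σ₀ v < S := fun v =>
    Nat.lt_succ_of_le (Finset.le_sup (Finset.mem_univ v))
  have hfin : Finite (BWQ.Wt A σ₀) := by
    have hbnd : ∀ t : BWQ.Wt A σ₀, t.val.1 < S ∧ t.val.2.1 < S ∧ t.val.2.2 < b + 1 := by
      intro t
      obtain ⟨v, w, rr, harc, e1, e2, hvw, hwb, hr1, hrb, hw, h3e, hdisj, hpos, hjnd⟩ :=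
        BWQ.node_facts A σ₀ b htopo hband t
      have hv := hS v
      have hw' := hS w
      have hjnd' : t.val.2.2 < (σ₀ w - σ₀ v - 1) / 2 := hjnd
      refine ⟨by omega, by omega, by omega⟩
    exact Finite.of_injective
      (fun t => ((⟨t.val.1, (hbnd t).1⟩ : Fin S), (⟨t.val.2.1, (hbnd t).2.1⟩ : Fin S),
        (⟨t.val.2.2, (hbnd t).2.2⟩ : Fin (b + 1))))
      (by
        intro t t' e
        simp only [Prod.mk.injEq, Fin.mk.injEq] at e
        exact Subtype.ext (Prod.ext_iff.mpr ⟨e.1, Prod.ext_iff.mpr ⟨e.2.1, e.2.2⟩⟩))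
  refine ⟨BWQ.Wt A σ₀, @Fintype.ofFinite _ hfin, BWQ.PL A σ₀,
    (fun x y => ∃ (v w : V) (h : A v w),
      (x, y) ∈ (Sum.inl v :: ((BWQ.PL A σ₀ v w h).map Sum.inr ++ [Sum.inl w])).zip
        ((BWQ.PL A σ₀ v w h).map Sum.inr ++ [Sum.inl w])),
    ?_, ?_, ?_, ?_, fun x y => Iff.rfl, ?_⟩
  · -- length bound
    intro v w h
    have h1 := htopo v w h
    have h2 := hband v w h
    simp only [BWQ.PL, List.length_pmap, List.length_range, BWQ.nd]
    omega
  · -- nodup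
    intro v w h
    refine List.Nodup.pmap ?_ List.nodup_range
    intro a ha a' ha' he
    have h22 : (BWQ.mk A σ₀ v w a h ha).val.2.2 = (BWQ.mk A σ₀ v w a' h ha').val.2.2 := by
      rw [he]
    simpa [BWQ.mk] using h22
  · -- disjoint
    intro v w x y h1 h2 hne d hd1 hd2
    rw [BWQ.PL, List.mem_pmap] at hd1 hd2
    obtain ⟨a, ha, he1⟩ := hd1
    obtain ⟨a', ha', he2⟩ := hd2
    apply hne
    have he := he1.trans he2.symm
    have hv : σ₀ v = σ₀ x := by
      have := congrArg (fun t : BWQ.Wt A σ₀ => t.val.1) he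
      simpa [BWQ.mk] using this
    have hw : σ₀ w = σ₀ y := by
      have := congrArg (fun t : BWQ.Wt A σ₀ => t.val.2.1) he
      simpa [BWQ.mk] using this
    rw [Prod.ext_iff]
    exact ⟨hσinj hv, hσinj hw⟩
  · -- coverage
    intro d
    obtain ⟨v, w, harc, e1, e2, hj⟩ := d.2
    refine ⟨v, w, harc, ?_⟩
    rw [BWQ.PL, List.mem_pmap]
    refine ⟨d.val.2.2, List.mem_range.mpr hj, ?_⟩
    apply Subtype.ext
    exact Prod.ext_iff.mpr ⟨e1.symm, Prod.ext_iff.mpr ⟨e2.symm, rfl⟩⟩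
  · -- the layout
    set C : ℕ := S + 2 * b + 2 with hC
    have kapb : ∀ n, BWQ.kapf A σ₀ b n < C := by
      intro n
      cases n with
      | inl a => simp only [BWQ.kapf]; omega
      | inr t =>
        obtain ⟨v, w, rr, _, _, _, _, _, hr1, hrb, _, _, hdisj, _, _⟩ :=
          BWQ.node_facts A σ₀ b htopo hband t
        omega
    have k3b : ∀ n, BWQ.k3f A σ₀ n < C := by
      intro n
      cases n with
      | inl a => simp only [BWQ.k3f]; omega
      | inr t =>
        obtain ⟨v, w, rr, _, _, _, _, _, hr1, hrb, _, h3e, _, _, _⟩ :=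
          BWQ.node_facts A σ₀ b htopo hband t
        have := hS v
        omega
    refine ⟨BWQ.tauf A σ₀ b C,
      fun x _ _ => Sum.elim (fun _ => (0 : Fin 2)) (fun _ => (1 : Fin 2)) x, ?_, ?_, ?_⟩
    · -- injective
      intro n n' he
      obtain ⟨hp, hk, h3⟩ := BWQ.digits_eq (kapb n) (k3b n) (kapb n') (k3b n') he
      cases n with
      | inl a =>
        cases n' with
        | inl a' => exact congrArg Sum.inl (hσinj (by simpa [BWQ.posf] using hp))
        | inr t' =>
          exfalso
          obtain ⟨v, w, rr, _, _, _, _, _, hr1, hrb, _, _, hdisj, _, _⟩ :=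
            BWQ.node_facts A σ₀ b htopo hband t'
          have hka : BWQ.kapf A σ₀ b (Sum.inl a) = b + 1 := rfl
          omega
      | inr t =>
        cases n' with
        | inl a' =>
          exfalso
          obtain ⟨v, w, rr, _, _, _, _, _, hr1, hrb, _, _, hdisj, _, _⟩ :=
            BWQ.node_facts A σ₀ b htopo hband t
          have hka : BWQ.kapf A σ₀ b (Sum.inl a') = b + 1 := rfl
          omega
        | inr t' =>
          obtain ⟨v, w, rr, harc, e1, e2, hvw, hwb, hr1, hrb, hw, h3e, hdisj, hpos, hjnd⟩ :=
            BWQ.node_facts A σ₀ b htopo hband t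
          obtain ⟨v', w', rr', harc', e1', e2', hvw', hwb', hr1', hrb', hw', h3e', hdisj',
            hpos', hjnd'⟩ := BWQ.node_facts A σ₀ b htopo hband t'
          have hv : v = v' := hσinj (by omega)
          subst hv
          have hrr : rr = rr' := by omega
          have hww : w = w' := hσinj (by omega)
          subst hww
          have hj : t.val.2.2 = t'.val.2.2 := by omega
          exact congrArg Sum.inr (Subtype.ext
            (Prod.ext_iff.mpr ⟨by omega, Prod.ext_iff.mpr ⟨by omega, hj⟩⟩))
    · -- strictly increasing along arcs of B
      intro x y hB
      rcases BWQ.spec_of_B A σ₀ b htopo hband hB with ⟨v, w, harc, hx, hs⟩ |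
        ⟨v, w, t, harc, hx, hs⟩
      · obtain ⟨hy1, _⟩ := hs
        subst hx
        have hlt : BWQ.posf A σ₀ (Sum.inl v) < BWQ.posf A σ₀ y := by
          have hpv : BWQ.posf A σ₀ (Sum.inl v) = σ₀ v := rfl
          omega
        exact BWQ.lex_mono (kapb _) (k3b _) hlt
      · obtain ⟨rr, hr1, hrb, hw, hp2, _⟩ := hs
        exact BWQ.lex_mono (kapb _) (k3b _) (by omega)
    · -- no two nested arcs in the same queue
      intro x y x' y' h1 h2 hq hcon
      obtain ⟨hxx, hyy⟩ := hcon
      have l1 := BWQ.lex_lt (kapb x) (k3b x) (kapb x') (k3b x') hxx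
      have l2 := BWQ.lex_lt (kapb y') (k3b y') (kapb y) (k3b y) hyy
      rcases BWQ.spec_of_B A σ₀ b htopo hband h1 with ⟨v, w, harc, hx, hs⟩ |
        ⟨v, w, t, harc, hx, hs⟩ <;>
        rcases BWQ.spec_of_B A σ₀ b htopo hband h2 with ⟨v', w', harc', hx', hs'⟩ |
          ⟨v', w', t', harc', hx', hs'⟩
      · -- F, F
        subst hx; subst hx'
        obtain ⟨hy1, hy2, hy3, hy4, hy5⟩ := hs
        obtain ⟨hy1', hy2', hy3', hy4', hy5'⟩ := hs'
        simp only [BWQ.posf, BWQ.kapf, BWQ.k3f] at l1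
        have key : BWQ.kapf A σ₀ b y = b + 1 ∧ BWQ.kapf A σ₀ b y' = b + 1 ∧
            BWQ.posf A σ₀ y = BWQ.posf A σ₀ y' := by
          clear hy5 hy5' hq
          omega
        obtain ⟨ky, ky', hpy⟩ := key
        obtain ⟨hyw, hyp⟩ := hy5 ky
        obtain ⟨hyw', hyp'⟩ := hy5' ky'
        have hww : w = w' := hσinj (by omega)
        rw [hyw, hyw', hww] at hyy
        exact lt_irrefl _ hyy
      · -- F, M : different queues
        subst hx; subst hx'
        simp only [Sum.elim_inl, Sum.elim_inr] at hq
        exact absurd hq (by decide)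
      · -- M, F : different queues
        subst hx; subst hx'
        simp only [Sum.elim_inl, Sum.elim_inr] at hq
        exact absurd hq (by decide)
      · -- M, M
        subst hx; subst hx'
        obtain ⟨rr, hr1, hrb, hw, hp2, hk3x, hdisj, hyN, hyNN⟩ := hs
        obtain ⟨rr', hr1', hrb', hw', hp2', hk3x', hdisj', hyN', hyNN'⟩ := hs'
        have key : BWQ.kapf A σ₀ b y = b + 1 ∧ BWQ.kapf A σ₀ b y' = b + 1 ∧
            BWQ.posf A σ₀ y = BWQ.posf A σ₀ y' := by
          clear hyN hyN' hq
          omega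
        obtain ⟨ky, ky', hpy⟩ := key
        obtain ⟨hyw, hyp⟩ := hyN ky
        obtain ⟨hyw', hyp'⟩ := hyN' ky'
        have hww : w = w' := hσinj (by omega)
        rw [hyw, hyw', hww] at hyy
        exact lt_irrefl _ hyy
end

section
/- Let {V_i : 0 ≤ i ≤ c−1} be a c-colouring of a graph G and let p ≥ 2c−1 be prime. If each vertex of V_i is placed at a distinct point (i, t, i·t) with t ≡ i² (mod p), then no two straight edge segments of G cross and no edge passes through a non-endpoint vertex. -/
/-- Embedding of integer grid points into real 3-space. -/
def toR3 (p : ℤ × ℤ × ℤ) : ℝ × ℝ × ℝ := ((p.1 : ℝ), (p.2.1 : ℝ), (p.2.2 : ℝ))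

lemma fin_cast_inj {c p : ℕ} (hpc : 2 * c - 1 ≤ p) (i j : Fin c)
    (h : ((i : ℕ) : ZMod p) = ((j : ℕ) : ZMod p)) : i = j := by
  have hc : 0 < c := i.pos
  have hip : (i : ℕ) < p := by have := i.isLt; omega
  have hjp : (j : ℕ) < p := by have := j.isLt; omega
  haveI : NeZero p := ⟨by omega⟩
  have := congrArg ZMod.val h
  rw [ZMod.val_cast_of_lt hip, ZMod.val_cast_of_lt hjp] at this
  exact Fin.ext this

lemma sq_ne {c p : ℕ} (hp : p.Prime) (hpc : 2 * c - 1 ≤ p) (i j : Fin c)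
    (hij : i ≠ j) : (((i : ℕ) : ZMod p)) ^ 2 ≠ (((j : ℕ) : ZMod p)) ^ 2 := by
  haveI : Fact p.Prime := ⟨hp⟩
  intro h
  have hfac : (((i : ℕ) : ZMod p) - ((j : ℕ) : ZMod p)) *
      (((i : ℕ) : ZMod p) + ((j : ℕ) : ZMod p)) = 0 := by linear_combination h
  rcases mul_eq_zero.mp hfac with h0 | h0
  · exact hij (fin_cast_inj hpc i j (by linear_combination h0))
  · have : (((i : ℕ) + (j : ℕ) : ℕ) : ZMod p) = 0 := by push_cast; linear_combination h0
    have hdvd : p ∣ (i : ℕ) + (j : ℕ) := (ZMod.natCast_eq_zero_iff _ _).mp this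
    have hc : 0 < c := i.pos
    have hi := i.isLt; have hj := j.isLt
    rcases Nat.eq_zero_or_pos ((i : ℕ) + (j : ℕ)) with h0' | h0'
    · exact hij (Fin.ext (by omega))
    · have := Nat.le_of_dvd h0' hdvd; omega

lemma no_interior {c p : ℕ} (hp : p.Prime) (hpc : 2 * c - 1 ≤ p)
    (i j k l : Fin c) (hij : i ≠ j) (hkl : k ≠ l)
    (t1 t2 s1 s2 : ℤ)
    (h1 : (t1 : ZMod p) = ((i : ℕ) : ZMod p) ^ 2)
    (h2 : (t2 : ZMod p) = ((j : ℕ) : ZMod p) ^ 2)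
    (h3 : (s1 : ZMod p) = ((k : ℕ) : ZMod p) ^ 2)
    (h4 : (s2 : ZMod p) = ((l : ℕ) : ZMod p) ^ 2)
    (L M : ℝ) (hL0 : 0 < L) (hL1 : L < 1) (hM0 : 0 < M) (hM1 : M < 1)
    (E1 : (1 - L) * ((i : ℕ) : ℝ) + L * ((j : ℕ) : ℝ)
        = (1 - M) * ((k : ℕ) : ℝ) + M * ((l : ℕ) : ℝ))
    (E2 : (1 - L) * (t1 : ℝ) + L * (t2 : ℝ) = (1 - M) * (s1 : ℝ) + M * (s2 : ℝ))
    (E3 : (1 - L) * (((i : ℕ) : ℝ) * (t1 : ℝ)) + L * (((j : ℕ) : ℝ) * (t2 : ℝ))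
        = (1 - M) * (((k : ℕ) : ℝ) * (s1 : ℝ)) + M * (((l : ℕ) : ℝ) * (s2 : ℝ))) :
    (i = k ∧ j = l ∧ t1 = s1 ∧ t2 = s2) ∨ (i = l ∧ j = k ∧ t1 = s2 ∧ t2 = s1) := by
  haveI : Fact p.Prime := ⟨hp⟩
  have hRne : ∀ a b : Fin c, a ≠ b → ((a : ℕ) : ℝ) - ((b : ℕ) : ℝ) ≠ 0 := by
    intro a b hab h
    exact hab (Fin.ext (by exact_mod_cast sub_eq_zero.mp h))
  have hsq : ∀ (a b : Fin c), a ≠ b → ∀ (r s : ℤ), (r : ZMod p) = ((a : ℕ) : ZMod p) ^ 2 →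
      (s : ZMod p) = ((b : ℕ) : ZMod p) ^ 2 → (r : ℝ) ≠ (s : ℝ) := by
    intro a b hab r s hr hs hrs
    have hZ : r = s := by exact_mod_cast hrs
    exact sq_ne hp hpc a b hab (by rw [← hr, ← hs, hZ])
  have h1L : (1 : ℝ) - L ≠ 0 := by linarith
  have h1M : (1 : ℝ) - M ≠ 0 := by linarith
  have hDZ : ((((k : ℕ) : ℤ) - ((i : ℕ) : ℤ)) *
      ((t2 - t1) * (((l : ℕ) : ℤ) * s2 - ((k : ℕ) : ℤ) * s1)
        - (((j : ℕ) : ℤ) * t2 - ((i : ℕ) : ℤ) * t1) * (s2 - s1))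
      - (s1 - t1) * ((((j : ℕ) : ℤ) - ((i : ℕ) : ℤ)) * (((l : ℕ) : ℤ) * s2 - ((k : ℕ) : ℤ) * s1)
        - (((j : ℕ) : ℤ) * t2 - ((i : ℕ) : ℤ) * t1) * (((l : ℕ) : ℤ) - ((k : ℕ) : ℤ)))
      + (((k : ℕ) : ℤ) * s1 - ((i : ℕ) : ℤ) * t1) *
        ((((j : ℕ) : ℤ) - ((i : ℕ) : ℤ)) * (s2 - s1)
          - (t2 - t1) * (((l : ℕ) : ℤ) - ((k : ℕ) : ℤ)))) = 0 := by
    have hDR : ((((((k : ℕ) : ℤ) : ℤ) - ((i : ℕ) : ℤ)) *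
      ((t2 - t1) * (((l : ℕ) : ℤ) * s2 - ((k : ℕ) : ℤ) * s1)
        - (((j : ℕ) : ℤ) * t2 - ((i : ℕ) : ℤ) * t1) * (s2 - s1))
      - (s1 - t1) * ((((j : ℕ) : ℤ) - ((i : ℕ) : ℤ)) * (((l : ℕ) : ℤ) * s2 - ((k : ℕ) : ℤ) * s1)
        - (((j : ℕ) : ℤ) * t2 - ((i : ℕ) : ℤ) * t1) * (((l : ℕ) : ℤ) - ((k : ℕ) : ℤ)))
      + (((k : ℕ) : ℤ) * s1 - ((i : ℕ) : ℤ) * t1) *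
        ((((j : ℕ) : ℤ) - ((i : ℕ) : ℤ)) * (s2 - s1)
          - (t2 - t1) * (((l : ℕ) : ℤ) - ((k : ℕ) : ℤ)))) : ℝ) = 0 := by
      push_cast
      linear_combination
        (-(((t2 : ℝ) - t1) * (((l : ℕ) : ℝ) * s2 - ((k : ℕ) : ℝ) * s1)
           - (((j : ℕ) : ℝ) * t2 - ((i : ℕ) : ℝ) * t1) * ((s2 : ℝ) - s1))) * E1
        + ((((j : ℕ) : ℝ) - ((i : ℕ) : ℝ)) * (((l : ℕ) : ℝ) * s2 - ((k : ℕ) : ℝ) * s1)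
           - (((j : ℕ) : ℝ) * t2 - ((i : ℕ) : ℝ) * t1) * (((l : ℕ) : ℝ) - ((k : ℕ) : ℝ))) * E2
        + (-((((j : ℕ) : ℝ) - ((i : ℕ) : ℝ)) * ((s2 : ℝ) - s1)
           - ((t2 : ℝ) - t1) * (((l : ℕ) : ℝ) - ((k : ℕ) : ℝ)))) * E3
    exact_mod_cast hDR
  have hfac : (((j : ℕ) : ZMod p) - ((i : ℕ) : ZMod p)) * (((k : ℕ) : ZMod p) - ((i : ℕ) : ZMod p))
      * (((l : ℕ) : ZMod p) - ((i : ℕ) : ZMod p)) * (((k : ℕ) : ZMod p) - ((j : ℕ) : ZMod p))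
      * (((l : ℕ) : ZMod p) - ((j : ℕ) : ZMod p)) * (((k : ℕ) : ZMod p) - ((l : ℕ) : ZMod p)) = 0 := by
    have hz := congrArg (fun n : ℤ => (n : ZMod p)) hDZ
    push_cast at hz
    rw [h1, h2, h3, h4] at hz
    linear_combination hz
  rcases mul_eq_zero.mp hfac with hfc | h6
  rcases mul_eq_zero.mp hfc with hfc | h5
  rcases mul_eq_zero.mp hfc with hfc | h4'
  rcases mul_eq_zero.mp hfc with hfc | h3'
  rcases mul_eq_zero.mp hfc with h1' | h2'
  -- case j = i : contradiction
  · exact absurd (fin_cast_inj hpc j i (by linear_combination h1')).symm hij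
  -- case k = i
  · obtain rfl : i = k := (fin_cast_inj hpc k i (by linear_combination h2')).symm
    have hji : ((j : ℕ) : ℝ) - ((i : ℕ) : ℝ) ≠ 0 := hRne j i hij.symm
    have hE1' : L * (((j : ℕ) : ℝ) - ((i : ℕ) : ℝ)) = M * (((l : ℕ) : ℝ) - ((i : ℕ) : ℝ)) := by
      linear_combination E1
    have hE3' : L * (t2 : ℝ) * (((j : ℕ) : ℝ) - ((i : ℕ) : ℝ))
        = M * (s2 : ℝ) * (((l : ℕ) : ℝ) - ((i : ℕ) : ℝ)) := by
      linear_combination E3 - ((i : ℕ) : ℝ) * E2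
    by_cases hjl : j = l
    · subst hjl
      have hLM : L = M := mul_right_cancel₀ hji (by linear_combination hE1')
      have ht2 : (t2 : ℝ) = (s2 : ℝ) := by
        have hc1 : L * (t2 : ℝ) = L * (s2 : ℝ) :=
          mul_right_cancel₀ hji (by linear_combination hE3' - ((s2 : ℝ) * (((j:ℕ):ℝ) - ((i:ℕ):ℝ))) * hLM)
        exact mul_left_cancel₀ hL0.ne' hc1
      have ht1 : (t1 : ℝ) = (s1 : ℝ) := by
        have hc1 : (1 - L) * (t1 : ℝ) = (1 - L) * (s1 : ℝ) := by
          linear_combination E2 - L * ht2 + ((s1 : ℝ) - (s2 : ℝ)) * hLM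
        exact mul_left_cancel₀ h1L hc1
      exact Or.inl ⟨rfl, rfl, by exact_mod_cast ht1, by exact_mod_cast ht2⟩
    · exfalso
      have hM' : M * (((l : ℕ) : ℝ) - ((i : ℕ) : ℝ)) ≠ 0 := by
        rw [← hE1']; exact mul_ne_zero hL0.ne' hji
      have ht2 : (t2 : ℝ) = (s2 : ℝ) :=
        mul_right_cancel₀ hM' (by linear_combination hE3' - (t2 : ℝ) * hE1')
      exact hsq j l hjl t2 s2 h2 h4 ht2
  -- case l = i
  · obtain rfl : i = l := (fin_cast_inj hpc l i (by linear_combination h3')).symm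
    have hji : ((j : ℕ) : ℝ) - ((i : ℕ) : ℝ) ≠ 0 := hRne j i hij.symm
    have hE1' : L * (((j : ℕ) : ℝ) - ((i : ℕ) : ℝ)) = (1 - M) * (((k : ℕ) : ℝ) - ((i : ℕ) : ℝ)) := by
      linear_combination E1
    have hE3' : L * (t2 : ℝ) * (((j : ℕ) : ℝ) - ((i : ℕ) : ℝ))
        = (1 - M) * (s1 : ℝ) * (((k : ℕ) : ℝ) - ((i : ℕ) : ℝ)) := by
      linear_combination E3 - ((i : ℕ) : ℝ) * E2
    by_cases hjk : j = k
    · subst hjk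
      have hLM : L = 1 - M := mul_right_cancel₀ hji (by linear_combination hE1')
      have ht2 : (t2 : ℝ) = (s1 : ℝ) := by
        have hc1 : L * (t2 : ℝ) = L * (s1 : ℝ) :=
          mul_right_cancel₀ hji (by linear_combination hE3' - ((s1 : ℝ) * (((j:ℕ):ℝ) - ((i:ℕ):ℝ))) * hLM)
        exact mul_left_cancel₀ hL0.ne' hc1
      have ht1 : (t1 : ℝ) = (s2 : ℝ) := by
        have hc1 : M * (t1 : ℝ) = M * (s2 : ℝ) := by
          linear_combination E2 - L * ht2 + ((t1 : ℝ) - (s1 : ℝ)) * hLM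
        exact mul_left_cancel₀ hM0.ne' hc1
      exact Or.inr ⟨rfl, rfl, by exact_mod_cast ht1, by exact_mod_cast ht2⟩
    · exfalso
      have hM' : (1 - M) * (((k : ℕ) : ℝ) - ((i : ℕ) : ℝ)) ≠ 0 := by
        rw [← hE1']; exact mul_ne_zero hL0.ne' hji
      have ht2 : (t2 : ℝ) = (s1 : ℝ) :=
        mul_right_cancel₀ hM' (by linear_combination hE3' - (t2 : ℝ) * hE1')
      exact hsq j k hjk t2 s1 h2 h3 ht2
  -- case k = j
  · obtain rfl : j = k := (fin_cast_inj hpc k j (by linear_combination h4')).symm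
    have hij' : ((i : ℕ) : ℝ) - ((j : ℕ) : ℝ) ≠ 0 := hRne i j hij
    have hE1' : (1 - L) * (((i : ℕ) : ℝ) - ((j : ℕ) : ℝ)) = M * (((l : ℕ) : ℝ) - ((j : ℕ) : ℝ)) := by
      linear_combination E1
    have hE3' : (1 - L) * (t1 : ℝ) * (((i : ℕ) : ℝ) - ((j : ℕ) : ℝ))
        = M * (s2 : ℝ) * (((l : ℕ) : ℝ) - ((j : ℕ) : ℝ)) := by
      linear_combination E3 - ((j : ℕ) : ℝ) * E2
    by_cases hil : i = l
    · subst hil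
      have hLM : 1 - L = M := mul_right_cancel₀ hij' (by linear_combination hE1')
      have ht1 : (t1 : ℝ) = (s2 : ℝ) := by
        have hc1 : (1 - L) * (t1 : ℝ) = (1 - L) * (s2 : ℝ) :=
          mul_right_cancel₀ hij' (by linear_combination hE3' - ((s2 : ℝ) * (((i:ℕ):ℝ) - ((j:ℕ):ℝ))) * hLM)
        exact mul_left_cancel₀ h1L hc1
      have ht2 : (t2 : ℝ) = (s1 : ℝ) := by
        have hc1 : L * (t2 : ℝ) = L * (s1 : ℝ) := by
          linear_combination E2 - (1 - L) * ht1 - ((s2 : ℝ) - (s1 : ℝ)) * hLM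
        exact mul_left_cancel₀ hL0.ne' hc1
      exact Or.inr ⟨rfl, rfl, by exact_mod_cast ht1, by exact_mod_cast ht2⟩
    · exfalso
      have hM' : M * (((l : ℕ) : ℝ) - ((j : ℕ) : ℝ)) ≠ 0 := by
        rw [← hE1']; exact mul_ne_zero h1L hij'
      have ht1 : (t1 : ℝ) = (s2 : ℝ) :=
        mul_right_cancel₀ hM' (by linear_combination hE3' - (t1 : ℝ) * hE1')
      exact hsq i l hil t1 s2 h1 h4 ht1
  -- case l = j
  · obtain rfl : j = l := (fin_cast_inj hpc l j (by linear_combination h5)).symm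
    have hij' : ((i : ℕ) : ℝ) - ((j : ℕ) : ℝ) ≠ 0 := hRne i j hij
    have hE1' : (1 - L) * (((i : ℕ) : ℝ) - ((j : ℕ) : ℝ)) = (1 - M) * (((k : ℕ) : ℝ) - ((j : ℕ) : ℝ)) := by
      linear_combination E1
    have hE3' : (1 - L) * (t1 : ℝ) * (((i : ℕ) : ℝ) - ((j : ℕ) : ℝ))
        = (1 - M) * (s1 : ℝ) * (((k : ℕ) : ℝ) - ((j : ℕ) : ℝ)) := by
      linear_combination E3 - ((j : ℕ) : ℝ) * E2
    by_cases hik : i = k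
    · subst hik
      have hLM : 1 - L = 1 - M := mul_right_cancel₀ hij' (by linear_combination hE1')
      have ht1 : (t1 : ℝ) = (s1 : ℝ) := by
        have hc1 : (1 - L) * (t1 : ℝ) = (1 - L) * (s1 : ℝ) :=
          mul_right_cancel₀ hij' (by linear_combination hE3' - ((s1 : ℝ) * (((i:ℕ):ℝ) - ((j:ℕ):ℝ))) * hLM)
        exact mul_left_cancel₀ h1L hc1
      have ht2 : (t2 : ℝ) = (s2 : ℝ) := by
        have hc1 : L * (t2 : ℝ) = L * (s2 : ℝ) := by
          linear_combination E2 - (1 - L) * ht1 - ((s1 : ℝ) - (s2 : ℝ)) * hLM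
        exact mul_left_cancel₀ hL0.ne' hc1
      exact Or.inl ⟨rfl, rfl, by exact_mod_cast ht1, by exact_mod_cast ht2⟩
    · exfalso
      have hM' : (1 - M) * (((k : ℕ) : ℝ) - ((j : ℕ) : ℝ)) ≠ 0 := by
        rw [← hE1']; exact mul_ne_zero h1L hij'
      have ht1 : (t1 : ℝ) = (s1 : ℝ) :=
        mul_right_cancel₀ hM' (by linear_combination hE3' - (t1 : ℝ) * hE1')
      exact hsq i k hik t1 s1 h1 h3 ht1
  -- case k = l : contradiction
  · exact absurd (fin_cast_inj hpc k l (by linear_combination h6)) hkl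



lemma toR3_inj : Function.Injective toR3 := by
  intro a b h
  simp only [toR3, Prod.ext_iff] at h
  obtain ⟨h1, h2, h3⟩ := h
  exact Prod.ext (by exact_mod_cast h1) (Prod.ext (by exact_mod_cast h2) (by exact_mod_cast h3))

lemma seg_point {a b : ℤ × ℤ × ℤ} {z : ℝ × ℝ × ℝ} (h : z ∈ segment ℝ (toR3 a) (toR3 b)) :
    ∃ lb : ℝ, 0 ≤ lb ∧ lb ≤ 1 ∧
      z.1 = (1 - lb) * (a.1 : ℝ) + lb * (b.1 : ℝ) ∧
      z.2.1 = (1 - lb) * (a.2.1 : ℝ) + lb * (b.2.1 : ℝ) ∧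
      z.2.2 = (1 - lb) * (a.2.2 : ℝ) + lb * (b.2.2 : ℝ) := by
  obtain ⟨la, lb, hla, hlb, hlab, heq⟩ := h
  have hla' : la = 1 - lb := by linarith
  subst hla'
  obtain ⟨z1, z2, z3⟩ := z
  simp only [toR3, Prod.mk_add_mk, Prod.smul_mk, Prod.mk.injEq, smul_eq_mul] at heq
  obtain ⟨e1, e2, e3⟩ := heq
  exact ⟨lb, hlb, by linarith, e1.symm, e2.symm, e3.symm⟩

lemma seg_endpoints {a b : ℤ × ℤ × ℤ} {z : ℝ × ℝ × ℝ} {lb : ℝ}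
    (e1 : z.1 = (1 - lb) * (a.1 : ℝ) + lb * (b.1 : ℝ))
    (e2 : z.2.1 = (1 - lb) * (a.2.1 : ℝ) + lb * (b.2.1 : ℝ))
    (e3 : z.2.2 = (1 - lb) * (a.2.2 : ℝ) + lb * (b.2.2 : ℝ))
    (h : lb = 0 ∨ lb = 1) : z = toR3 a ∨ z = toR3 b := by
  rcases h with h | h
  · left
    have h1 : z.1 = (a.1 : ℝ) := by rw [e1, h]; ring
    have h2 : z.2.1 = (a.2.1 : ℝ) := by rw [e2, h]; ring
    have h3 : z.2.2 = (a.2.2 : ℝ) := by rw [e3, h]; ring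
    simp only [toR3, Prod.ext_iff]
    exact ⟨h1, h2, h3⟩
  · right
    have h1 : z.1 = (b.1 : ℝ) := by rw [e1, h]; ring
    have h2 : z.2.1 = (b.2.1 : ℝ) := by rw [e2, h]; ring
    have h3 : z.2.2 = (b.2.2 : ℝ) := by rw [e3, h]; ring
    simp only [toR3, Prod.ext_iff]
    exact ⟨h1, h2, h3⟩

/-- Pach–Thiele–Tóth construction: given a proper `c`-colouring of `G` and a
prime `p ≥ 2c-1`, placing each vertex of colour `i` at a distinct point
`(i, t, i·t)` with `t ≡ i² (mod p)` gives a crossing-free drawing: no two edge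
segments cross, and no edge passes through a non-endpoint vertex. -/
theorem coloured_placement_crossing_free {V : Type*} (G : SimpleGraph V)
    (c p : ℕ) (hp : p.Prime) (hpc : 2 * c - 1 ≤ p)
    (f : V → Fin c) (hproper : ∀ v w, G.Adj v w → f v ≠ f w)
    (t : V → ℤ) (ht : ∀ v, (t v : ZMod p) = (((f v : ℕ) : ZMod p)) ^ 2)
    (pos : V → ℤ × ℤ × ℤ)
    (hpos : ∀ v, pos v = (((f v : ℕ) : ℤ), t v, ((f v : ℕ) : ℤ) * t v))
    (hdist : Function.Injective pos) :
    (∀ v w x y, G.Adj v w → G.Adj x y →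
      ¬ (v = x ∧ w = y) → ¬ (v = y ∧ w = x) →
      ∀ z ∈ segment ℝ (toR3 (pos v)) (toR3 (pos w)),
        z ∈ segment ℝ (toR3 (pos x)) (toR3 (pos y)) →
        ∃ u, (u = v ∨ u = w) ∧ (u = x ∨ u = y) ∧ z = toR3 (pos u)) ∧
    (∀ v w u, G.Adj v w → u ≠ v → u ≠ w →
      toR3 (pos u) ∉ segment ℝ (toR3 (pos v)) (toR3 (pos w))) := by
  have htne : ∀ v w, G.Adj v w → (t v : ℝ) ≠ (t w : ℝ) := by
    intro v w hvw hEq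
    have hZ : t v = t w := by exact_mod_cast hEq
    exact sq_ne hp hpc (f v) (f w) (hproper v w hvw) (by rw [← ht v, ← ht w, hZ])
  have hfne : ∀ v w, G.Adj v w → ((f v : ℕ) : ℝ) ≠ ((f w : ℕ) : ℝ) := by
    intro v w hvw h
    exact hproper v w hvw (Fin.ext (by exact_mod_cast h))
  have hDne : ∀ v w, G.Adj v w →
      (((f w : ℕ) : ℝ) - ((f v : ℕ) : ℝ)) * ((t w : ℝ) - (t v : ℝ)) ≠ 0 := by
    intro v w hvw
    exact mul_ne_zero (sub_ne_zero.mpr (hfne v w hvw).symm)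
      (sub_ne_zero.mpr (htne v w hvw).symm)
  -- F-identity for a segment point
  have hFid : ∀ v w (z : ℝ × ℝ × ℝ) (lb : ℝ),
      z.1 = (1 - lb) * (((pos v).1 : ℝ)) + lb * (((pos w).1 : ℝ)) →
      z.2.1 = (1 - lb) * (((pos v).2.1 : ℝ)) + lb * (((pos w).2.1 : ℝ)) →
      z.2.2 = (1 - lb) * (((pos v).2.2 : ℝ)) + lb * (((pos w).2.2 : ℝ)) →
      z.2.2 - z.1 * z.2.1
        = lb * (1 - lb) * ((((f w : ℕ) : ℝ) - ((f v : ℕ) : ℝ)) * ((t w : ℝ) - (t v : ℝ))) := by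
    intro v w z lb e1 e2 e3
    rw [hpos v, hpos w] at e1 e2 e3
    push_cast at e1 e2 e3
    rw [e1, e2, e3]; ring
  constructor
  · intro v w x y hvw hxy hne1 hne2 z hz1 hz2
    obtain ⟨lb, hlb0, hlb1, e1, e2, e3⟩ := seg_point hz1
    obtain ⟨mb, hmb0, hmb1, g1, g2, g3⟩ := seg_point hz2
    have hF1 := hFid v w z lb e1 e2 e3
    have hF2 := hFid x y z mb g1 g2 g3
    by_cases hint : lb = 0 ∨ lb = 1
    · -- z is an endpoint of the first segment
      have hz0 : z.2.2 - z.1 * z.2.1 = 0 := by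
        rcases hint with h | h <;> rw [hF1, h] <;> ring
      have hmend : mb = 0 ∨ mb = 1 := by
        have h0 : mb * (1 - mb) * ((((f y : ℕ) : ℝ) - ((f x : ℕ) : ℝ)) * ((t y : ℝ) - (t x : ℝ)))
            = 0 := by rw [← hF2]; exact hz0
        rcases mul_eq_zero.mp h0 with h0' | h0'
        · rcases mul_eq_zero.mp h0' with h0'' | h0''
          · exact Or.inl h0''
          · exact Or.inr (by linarith)
        · exact absurd h0' (hDne x y hxy)
      have hc1 := seg_endpoints e1 e2 e3 hint
      have hc2 := seg_endpoints g1 g2 g3 hmend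
      rcases hc1 with h1 | h1 <;> rcases hc2 with h2 | h2
      · exact ⟨v, Or.inl rfl, Or.inl (hdist (toR3_inj (h1.symm.trans h2))), h1⟩
      · exact ⟨v, Or.inl rfl, Or.inr (hdist (toR3_inj (h1.symm.trans h2))), h1⟩
      · exact ⟨w, Or.inr rfl, Or.inl (hdist (toR3_inj (h1.symm.trans h2))), h1⟩
      · exact ⟨w, Or.inr rfl, Or.inr (hdist (toR3_inj (h1.symm.trans h2))), h1⟩
    · -- interior crossing: impossible
      exfalso
      push_neg at hint
      obtain ⟨hl0, hl1⟩ := hint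
      have hlb0' : 0 < lb := lt_of_le_of_ne hlb0 (Ne.symm hl0)
      have hlb1' : lb < 1 := lt_of_le_of_ne hlb1 hl1
      have hmint : ¬ (mb = 0 ∨ mb = 1) := by
        intro h
        have hz0 : z.2.2 - z.1 * z.2.1 = 0 := by
          rcases h with h | h <;> rw [hF2, h] <;> ring
        have h0 : lb * (1 - lb) * ((((f w : ℕ) : ℝ) - ((f v : ℕ) : ℝ)) * ((t w : ℝ) - (t v : ℝ)))
            = 0 := by rw [← hF1]; exact hz0
        rcases mul_eq_zero.mp h0 with h0' | h0'
        · rcases mul_eq_zero.mp h0' with h0'' | h0''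
          · exact hl0 h0''
          · exact hl1 (by linarith)
        · exact hDne v w hvw h0'
      push_neg at hmint
      obtain ⟨hm0, hm1⟩ := hmint
      have hmb0' : 0 < mb := lt_of_le_of_ne hmb0 (Ne.symm hm0)
      have hmb1' : mb < 1 := lt_of_le_of_ne hmb1 hm1
      rw [hpos v, hpos w] at e1 e2 e3
      rw [hpos x, hpos y] at g1 g2 g3
      push_cast at e1 e2 e3 g1 g2 g3
      have E1 : (1 - lb) * ((f v : ℕ) : ℝ) + lb * ((f w : ℕ) : ℝ)
          = (1 - mb) * ((f x : ℕ) : ℝ) + mb * ((f y : ℕ) : ℝ) := by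
        linear_combination g1 - e1
      have E2 : (1 - lb) * (t v : ℝ) + lb * (t w : ℝ)
          = (1 - mb) * (t x : ℝ) + mb * (t y : ℝ) := by
        linear_combination g2 - e2
      have E3 : (1 - lb) * (((f v : ℕ) : ℝ) * (t v : ℝ)) + lb * (((f w : ℕ) : ℝ) * (t w : ℝ))
          = (1 - mb) * (((f x : ℕ) : ℝ) * (t x : ℝ)) + mb * (((f y : ℕ) : ℝ) * (t y : ℝ)) := by
        linear_combination g3 - e3
      rcases no_interior hp hpc (f v) (f w) (f x) (f y) (hproper v w hvw) (hproper x y hxy)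
          (t v) (t w) (t x) (t y) (ht v) (ht w) (ht x) (ht y)
          lb mb hlb0' hlb1' hmb0' hmb1' E1 E2 E3 with
        ⟨hik, hjl, ht1, ht2⟩ | ⟨hik, hjl, ht1, ht2⟩
      · exact hne1 ⟨hdist (by rw [hpos v, hpos x, hik, ht1]),
          hdist (by rw [hpos w, hpos y, hjl, ht2])⟩
      · exact hne2 ⟨hdist (by rw [hpos v, hpos y, hik, ht1]),
          hdist (by rw [hpos w, hpos x, hjl, ht2])⟩
  · intro v w u hvw huv huw hmem
    obtain ⟨lb, hlb0, hlb1, e1, e2, e3⟩ := seg_point hmem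
    have hF1 := hFid v w _ lb e1 e2 e3
    have hz0 : (toR3 (pos u)).2.2 - (toR3 (pos u)).1 * (toR3 (pos u)).2.1 = 0 := by
      rw [hpos u]; simp only [toR3]; push_cast; ring
    have h0 : lb * (1 - lb) * ((((f w : ℕ) : ℝ) - ((f v : ℕ) : ℝ)) * ((t w : ℝ) - (t v : ℝ)))
        = 0 := by rw [← hF1]; exact hz0
    have hend : lb = 0 ∨ lb = 1 := by
      rcases mul_eq_zero.mp h0 with h0' | h0'
      · rcases mul_eq_zero.mp h0' with h0'' | h0''
        · exact Or.inl h0''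
        · exact Or.inr (by linarith)
      · exact absurd h0' (hDne v w hvw)
    rcases seg_endpoints e1 e2 e3 hend with h1 | h1
    · exact huv (hdist (toR3_inj h1))
    · exact huw (hdist (toR3_inj h1))
end

section
/- Every c-colourable dag G on n vertices has an upward three-dimensional grid drawing of width c, depth less than 4c²n, and height at most 4cn; in particular the volume is O(c⁴n²). -/
/-- The 4×4 determinant of the matrix with rows `(1, X, X*Z, Z)` for four
points lying on the surface `y = x·z`. -/
def UDdet (A B E F al be ga de : ℤ) : ℤ :=
  A*B*al*ga - A*B*al*de - A*B*be*ga + A*B*be*de - A*E*al*be + A*E*al*de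
  + A*E*be*ga - A*E*ga*de + A*F*al*be - A*F*al*ga - A*F*be*de + A*F*ga*de
  + B*E*al*be - B*E*al*ga - B*E*be*de + B*E*ga*de - B*F*al*be + B*F*al*de
  + B*F*be*ga - B*F*ga*de + E*F*al*ga - E*F*al*de - E*F*be*ga + E*F*be*de

/-- If a point of two intersecting segments gives an affine relation among the
four (integer) endpoints, the determinant of the 4×4 matrix of their
homogeneous coordinates vanishes. -/
lemma UDdet_zero (Ai Bi Ei Fi ali bei gai dei : ℤ) {a b a' b' : ℝ}
    (hab : a + b = 1) (hab' : a' + b' = 1)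
    (hx : a * (Ai : ℝ) + b * (Bi : ℝ) = a' * (Ei : ℝ) + b' * (Fi : ℝ))
    (hy : a * ((Ai : ℝ) * (ali : ℝ)) + b * ((Bi : ℝ) * (bei : ℝ))
        = a' * ((Ei : ℝ) * (gai : ℝ)) + b' * ((Fi : ℝ) * (dei : ℝ)))
    (hz : a * (ali : ℝ) + b * (bei : ℝ) = a' * (gai : ℝ) + b' * (dei : ℝ)) :
    UDdet Ai Bi Ei Fi ali bei gai dei = 0 := by
  set M : Matrix (Fin 4) (Fin 4) ℝ :=
    !![1, (Ai : ℝ), (Ai : ℝ) * (ali : ℝ), (ali : ℝ);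
       1, (Bi : ℝ), (Bi : ℝ) * (bei : ℝ), (bei : ℝ);
       1, (Ei : ℝ), (Ei : ℝ) * (gai : ℝ), (gai : ℝ);
       1, (Fi : ℝ), (Fi : ℝ) * (dei : ℝ), (dei : ℝ)] with hM
  have hvm : Matrix.vecMul ![a, b, -a', -b'] M = 0 := by
    funext j
    fin_cases j <;>
      simp [hM, Matrix.vecMul, dotProduct, Fin.sum_univ_four] <;>
      linarith
  have hne : (![a, b, -a', -b'] : Fin 4 → ℝ) ≠ 0 := by
    intro h
    have h0 : a = 0 := congrFun h 0
    have h1 : b = 0 := congrFun h 1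
    rw [h0, h1] at hab; norm_num at hab
  have hdet : M.det = 0 := Matrix.exists_vecMul_eq_zero_iff.mp ⟨_, hne, hvm⟩
  have hcast : ((UDdet Ai Bi Ei Fi ali bei gai dei : ℤ) : ℝ) = M.det := by
    rw [hM]
    simp [Matrix.det_succ_row_zero, Fin.sum_univ_succ, UDdet, Fin.succAbove]
    ring
  rw [hdet] at hcast
  exact_mod_cast hcast

/-- Algebraic identity: if a point `(X3, X3*Z3, Z3)` on the surface `y = x z`
is an affine combination (with weights `s, t`, `s + t = u`, scaled by `u`) of
two other points of the surface, then `s*t*(X1-X2)*(Z1-Z2) = 0`. -/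
lemma UDsurf {s t u X1 Z1 X2 Z2 X3 Z3 : ℝ} (hsum : s + t = u)
    (hx : s*X1 + t*X2 = u*X3) (hy : s*(X1*Z1) + t*(X2*Z2) = u*(X3*Z3))
    (hz : s*Z1 + t*Z2 = u*Z3) : s*t*((X1-X2)*(Z1-Z2)) = 0 := by
  linear_combination (s + t) * hy - (s*Z1 + t*Z2) * hx - (u*X3) * hz
    + (X3*Z3*u) * hsum

/-- Components of a convex/affine combination of two explicit points
of `ℝ × ℝ × ℝ`. -/
lemma UDcomp {a b x1 y1 z1 x2 y2 z2 : ℝ} {q : ℝ × ℝ × ℝ}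
    (h : a • ((x1, y1, z1) : ℝ × ℝ × ℝ) + b • ((x2, y2, z2) : ℝ × ℝ × ℝ) = q) :
    a*x1 + b*x2 = q.1 ∧ a*y1 + b*y2 = q.2.1 ∧ a*z1 + b*z2 = q.2.2 := by
  subst h
  refine ⟨?_, ?_, ?_⟩ <;> simp [Prod.smul_mk, Prod.mk_add_mk, smul_eq_mul]

/-- A topological (linear-extension) enumeration of a finite dag. -/
lemma UDrank {V : Type*} [Fintype V] (A : V → V → Prop)
    (hacyc : ∀ v, ¬ Relation.TransGen A v v) :
    ∃ k : V → ℕ, Function.Injective k ∧ (∀ v, k v < Fintype.card V) ∧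
      ∀ v w, A v w → k v < k w := by
  classical
  cases isEmpty_or_nonempty V with
  | inl hV =>
    exact ⟨fun v => 0, fun v => isEmptyElim v, fun v => isEmptyElim v,
      fun v => isEmptyElim v⟩
  | inr hV =>
  set n := Fintype.card V with hn
  have hn0 : 0 < n := Fintype.card_pos
  obtain e := Fintype.equivFin V
  set g : V → ℕ := fun v =>
    (Finset.univ.filter fun u => Relation.TransGen A u v).card with hg
  have hgm : ∀ v w, A v w → g v < g w := by
    intro v w h
    apply Finset.card_lt_card
    have hsub : (Finset.univ.filter fun u => Relation.TransGen A u v)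
        ⊆ (Finset.univ.filter fun u => Relation.TransGen A u w) := by
      intro u hu
      simp only [Finset.mem_filter, Finset.mem_univ, true_and] at hu ⊢
      exact hu.tail h
    rw [Finset.ssubset_iff_of_subset hsub]
    exact ⟨v, by simp [Relation.TransGen.single h], by simpa using hacyc v⟩
  set m : V → ℕ := fun v => (e v : ℕ) + n * g v with hm
  have hmlt : ∀ v, (e v : ℕ) < n := fun v => (e v).isLt
  have hminj : Function.Injective m := by
    intro u v h
    have h1 : (e u : ℕ) % n = (e v : ℕ) % n := by
      have := congrArg (· % n) h
      simpa [hm, Nat.add_mul_mod_self_left] using this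
    rw [Nat.mod_eq_of_lt (hmlt u), Nat.mod_eq_of_lt (hmlt v)] at h1
    exact e.injective (Fin.ext h1)
  have hmm : ∀ v w, A v w → m v < m w := by
    intro v w h
    have h1 : g v + 1 ≤ g w := hgm v w h
    have h2 : n * g v + n ≤ n * g w := by
      calc n * g v + n = n * (g v + 1) := by ring
      _ ≤ n * g w := Nat.mul_le_mul_left n h1
    have h3 := hmlt v
    simp only [hm]
    omega
  set k : V → ℕ := fun v => (Finset.univ.filter fun u => m u < m v).card with hk
  have hkm : ∀ v w, m v < m w → k v < k w := by
    intro v w h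
    apply Finset.card_lt_card
    have hsub : (Finset.univ.filter fun u => m u < m v)
        ⊆ (Finset.univ.filter fun u => m u < m w) := by
      intro u hu
      simp only [Finset.mem_filter, Finset.mem_univ, true_and] at hu ⊢
      omega
    rw [Finset.ssubset_iff_of_subset hsub]
    exact ⟨v, by simp [h], by simp⟩
  refine ⟨k, ?_, ?_, fun v w h => hkm v w (hmm v w h)⟩
  · intro u v h
    by_contra hne
    have hmne : m u ≠ m v := fun hh => hne (hminj hh)
    rcases lt_or_gt_of_ne hmne with h' | h'
    · exact absurd h (Nat.ne_of_lt (hkm u v h'))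
    · exact absurd h.symm (Nat.ne_of_lt (hkm v u h'))
  · intro v
    have hsub : (Finset.univ.filter fun u => m u < m v) ⊆ Finset.univ.erase v := by
      intro u hu
      simp only [Finset.mem_filter, Finset.mem_univ, true_and] at hu
      exact Finset.mem_erase.mpr ⟨fun hh => by simp [hh] at hu, Finset.mem_univ u⟩
    calc k v ≤ (Finset.univ.erase v).card := Finset.card_le_card hsub
    _ < Finset.univ.card := Finset.card_erase_lt_of_mem (Finset.mem_univ v)
    _ = n := rfl

set_option maxHeartbeats 2000000 in
/-- Every `c`-colourable dag on `n` vertices has an upward three-dimensional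
grid drawing of width `c`, depth less than `4c²n` and height at most `4cn`
(hence volume `O(c⁴n²)`): vertices at distinct grid points, every arc strictly
increasing in z, segments pairwise non-crossing, and no segment passing through
a non-endpoint vertex. -/
theorem colourable_dag_upward_drawing {V : Type*} [Fintype V]
    (A : V → V → Prop) (hacyc : ∀ v, ¬ Relation.TransGen A v v)
    (c : ℕ) (f : V → Fin c) (hproper : ∀ v w, A v w → f v ≠ f w) :
    ∃ pos : V → ℤ × ℤ × ℤ,
      Function.Injective pos ∧
      (∀ v w, A v w → (pos v).2.2 < (pos w).2.2) ∧
      (∀ v, 0 ≤ (pos v).1 ∧ (pos v).1 < c ∧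
        0 ≤ (pos v).2.1 ∧ (pos v).2.1 < 4 * c ^ 2 * Fintype.card V ∧
        0 ≤ (pos v).2.2 ∧ (pos v).2.2 < 4 * c * Fintype.card V) ∧
      (∀ v w x y, A v w → A x y → ¬ (v = x ∧ w = y) →
        ∀ z ∈ segment ℝ (toR3 (pos v)) (toR3 (pos w)),
          z ∈ segment ℝ (toR3 (pos x)) (toR3 (pos y)) →
          ∃ u, (u = v ∨ u = w) ∧ (u = x ∨ u = y) ∧ z = toR3 (pos u)) ∧
      (∀ v w u, A v w → u ≠ v → u ≠ w →
        toR3 (pos u) ∉ segment ℝ (toR3 (pos v)) (toR3 (pos w))) := by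
  classical
  cases isEmpty_or_nonempty V with
  | inl hV =>
    exact ⟨fun _ => (0, 0, 0), fun v => isEmptyElim v, fun v => isEmptyElim v,
      fun v => isEmptyElim v, fun v => isEmptyElim v, fun v => isEmptyElim v⟩
  | inr hV =>
  set n := Fintype.card V with hn
  have hn1 : 1 ≤ n := Fintype.card_pos
  have hc1 : 1 ≤ c := by
    obtain ⟨v⟩ := hV
    exact (f v).pos
  obtain ⟨k, hkinj, hklt, hkmono⟩ := UDrank A hacyc
  obtain ⟨p, hpp, hpl, hpu⟩ := Nat.exists_prime_lt_and_le_two_mul (2 * c - 1)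
    (by omega)
  haveI := Fact.mk hpp
  have hcp : c ≤ p := by omega
  have hp0 : (0:ℤ) < (p:ℤ) := by exact_mod_cast hpp.pos
  set X : V → ℤ := fun v => ((f v : ℕ) : ℤ) with hX
  set z : V → ℤ := fun v => (p:ℤ) * (k v : ℤ) + (X v ^ 2 % (p:ℤ)) with hzdef
  have hr0 : ∀ v, 0 ≤ X v ^ 2 % (p:ℤ) := fun v => Int.emod_nonneg _ (ne_of_gt hp0)
  have hrp : ∀ v, X v ^ 2 % (p:ℤ) < (p:ℤ) := fun v => Int.emod_lt_of_pos _ hp0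
  have hzlt : ∀ u₁ u₂ : V, k u₁ < k u₂ → z u₁ < z u₂ := by
    intro u₁ u₂ h
    have h1 : (k u₁ : ℤ) + 1 ≤ (k u₂ : ℤ) := by exact_mod_cast h
    have h2 : (p:ℤ) * ((k u₁:ℤ) + 1) ≤ (p:ℤ) * (k u₂:ℤ) :=
      mul_le_mul_of_nonneg_left h1 (le_of_lt hp0)
    have h3 := hr0 u₂; have h4 := hrp u₁
    simp only [hzdef]; nlinarith
  have hzinj : ∀ u₁ u₂ : V, z u₁ = z u₂ → u₁ = u₂ := by
    intro u₁ u₂ h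
    rcases lt_trichotomy (k u₁) (k u₂) with h' | h' | h'
    · exact absurd h (ne_of_lt (hzlt _ _ h'))
    · exact hkinj h'
    · exact absurd h.symm (ne_of_lt (hzlt _ _ h'))
  have hAvne : ∀ {v w : V}, A v w → v ≠ w := by
    intro v w h hvw; subst hvw; exact hacyc v (Relation.TransGen.single h)
  have hzmono : ∀ v w, A v w → z v < z w := fun v w h => hzlt v w (hkmono v w h)
  have hXinj : ∀ u₁ u₂ : V, X u₁ = X u₂ → f u₁ = f u₂ := by
    intro u₁ u₂ h
    simp only [hX] at h
    exact Fin.ext (by exact_mod_cast h)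
  have hfC : ∀ v, (f v : ℕ) < c := fun v => (f v).isLt
  have hz0 : ∀ v, 0 ≤ z v := by
    intro v
    simp only [hzdef]
    have := hr0 v
    have h2 : (0:ℤ) ≤ (p:ℤ) * (k v : ℤ) :=
      mul_nonneg (le_of_lt hp0) (Int.natCast_nonneg _)
    linarith
  have hzub : ∀ v, z v < 4 * (c:ℤ) * (n:ℤ) := by
    intro v
    have h1 : (k v : ℤ) + 1 ≤ (n:ℤ) := by exact_mod_cast hklt v
    have h2 : (p:ℤ) * ((k v:ℤ)+1) ≤ (p:ℤ) * (n:ℤ) :=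
      mul_le_mul_of_nonneg_left h1 (le_of_lt hp0)
    have h3 : (p:ℤ) ≤ 4*(c:ℤ) - 2 := by omega
    have h5 : (0:ℤ) ≤ (n:ℤ) := Int.natCast_nonneg _
    have h4 := hrp v
    simp only [hzdef]
    nlinarith [mul_le_mul_of_nonneg_right h3 h5]
  set pos : V → ℤ × ℤ × ℤ := fun v => (X v, X v * z v, z v) with hpos
  have htoR3 : ∀ v, toR3 (pos v)
      = (((X v : ℝ)), (X v : ℝ) * (z v : ℝ), ((z v : ℝ))) := by
    intro v; simp [toR3, hpos]
  have hkey : ∀ v w u, A v w → u ≠ v → u ≠ w →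
      toR3 (pos u) ∉ segment ℝ (toR3 (pos v)) (toR3 (pos w)) := by
    intro v w u hvw huv huw hmem
    rw [htoR3 u, htoR3 v, htoR3 w] at hmem
    obtain ⟨s, t, hs, ht, hst, heq⟩ := hmem
    obtain ⟨h1, h2, h3⟩ := UDcomp heq
    dsimp only at h1 h2 h3
    have hsurf := UDsurf (s := s) (t := t) (u := (1:ℝ)) (X1 := (X v:ℝ))
      (Z1 := (z v:ℝ)) (X2 := (X w:ℝ)) (Z2 := (z w:ℝ)) (X3 := (X u:ℝ))
      (Z3 := (z u:ℝ)) (by linarith) (by linear_combination h1)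
      (by linear_combination h2) (by linear_combination h3)
    rcases mul_eq_zero.mp hsurf with hst0 | hfac
    · rcases mul_eq_zero.mp hst0 with hs0 | ht0
      · have h4 : (z w : ℝ) = (z u : ℝ) := by
          rw [hs0] at h3 hst; simp at h3 hst; rw [hst] at h3; linarith
        have h5 : z w = z u := by exact_mod_cast h4
        exact huw (hzinj u w h5.symm)
      · have h4 : (z v : ℝ) = (z u : ℝ) := by
          rw [ht0] at h3 hst; simp at h3 hst; rw [hst] at h3; linarith
        have h5 : z v = z u := by exact_mod_cast h4
        exact huv (hzinj u v h5.symm)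
    · rcases mul_eq_zero.mp hfac with hXX | hZZ
      · have h4 : X v = X w := by
          have : (X v:ℝ) = (X w:ℝ) := by linarith
          exact_mod_cast this
        exact hproper v w hvw (hXinj _ _ h4)
      · have h4 : z v = z w := by
          have : (z v:ℝ) = (z w:ℝ) := by linarith
          exact_mod_cast this
        exact hAvne hvw (hzinj _ _ h4)
  refine ⟨pos, ?_, ?_, ?_, ?_, hkey⟩
  · -- injectivity
    intro u₁ u₂ h
    have h3 : z u₁ = z u₂ := congrArg (fun t => t.2.2) h
    exact hzinj _ _ h3
  · -- upward
    intro v w h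
    exact hzmono v w h
  · -- bounds
    intro v
    have hx0 : (0:ℤ) ≤ X v := by simp only [hX]; exact Int.natCast_nonneg _
    have hxc : X v < (c:ℤ) := by
      simp only [hX]; exact_mod_cast hfC v
    have hxc' : X v ≤ (c:ℤ) - 1 := by omega
    have hzv0 := hz0 v
    have hzvu := hzub v
    have hcR : (1:ℤ) ≤ (c:ℤ) := by exact_mod_cast hc1
    have hnR : (1:ℤ) ≤ (n:ℤ) := by exact_mod_cast hn1
    refine ⟨hx0, hxc, mul_nonneg hx0 hzv0, ?_, hzv0, ?_⟩
    · have hm1 : X v * z v ≤ ((c:ℤ) - 1) * z v :=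
        mul_le_mul_of_nonneg_right hxc' hzv0
      have hm2 : ((c:ℤ) - 1) * z v ≤ ((c:ℤ) - 1) * (4*(c:ℤ)*(n:ℤ) - 1) :=
        mul_le_mul_of_nonneg_left (by linarith) (by linarith)
      have hm3 : (1:ℤ) ≤ (c:ℤ) * (n:ℤ) := by nlinarith
      push_cast
      nlinarith
    · push_cast
      linarith
  · -- non-crossing
    intro v w x y hvw hxy hnvwxy q hq1 hq2
    have hq1m := hq1
    have hq2m := hq2
    rw [htoR3 v, htoR3 w] at hq1
    rw [htoR3 x, htoR3 y] at hq2
    obtain ⟨a, b, ha, hb, hab, heq1⟩ := hq1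
    obtain ⟨a', b', ha', hb', hab', heq2⟩ := hq2
    obtain ⟨hx1, hy1, hz1⟩ := UDcomp heq1
    obtain ⟨hx2, hy2, hz2⟩ := UDcomp heq2
    have hEx : a * (X v:ℝ) + b * (X w:ℝ) = a' * (X x:ℝ) + b' * (X y:ℝ) := by
      rw [hx1, hx2]
    have hEy : a * ((X v:ℝ) * (z v:ℝ)) + b * ((X w:ℝ) * (z w:ℝ))
        = a' * ((X x:ℝ) * (z x:ℝ)) + b' * ((X y:ℝ) * (z y:ℝ)) := by
      rw [hy1, hy2]
    have hEz : a * (z v:ℝ) + b * (z w:ℝ) = a' * (z x:ℝ) + b' * (z y:ℝ) := by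
      rw [hz1, hz2]
    have hzvw := hzmono v w hvw
    have hzxy := hzmono x y hxy
    have hzvwR : (z v:ℝ) < (z w:ℝ) := by exact_mod_cast hzvw
    have hzxyR : (z x:ℝ) < (z y:ℝ) := by exact_mod_cast hzxy
    have hXvw : X v ≠ X w := fun h => hproper v w hvw (hXinj _ _ h)
    have hXxy : X x ≠ X y := fun h => hproper x y hxy (hXinj _ _ h)
    have hXvwR : (X v:ℝ) ≠ (X w:ℝ) := fun h => hXvw (by exact_mod_cast h)
    -- endpoint cases
    have hq1v : b = 0 → q = toR3 (pos v) := by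
      intro h0
      have ha1 : a = 1 := by linarith
      rw [htoR3 v]
      rw [ha1, h0] at heq1
      simpa using heq1.symm
    have hq1w : a = 0 → q = toR3 (pos w) := by
      intro h0
      have hb1 : b = 1 := by linarith
      rw [htoR3 w]
      rw [hb1, h0] at heq1
      simpa using heq1.symm
    have hq2x : b' = 0 → q = toR3 (pos x) := by
      intro h0
      have ha1 : a' = 1 := by linarith
      rw [htoR3 x]
      rw [ha1, h0] at heq2
      simpa using heq2.symm
    have hq2y : a' = 0 → q = toR3 (pos y) := by
      intro h0
      have hb1 : b' = 1 := by linarith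
      rw [htoR3 y]
      rw [hb1, h0] at heq2
      simpa using heq2.symm
    by_cases hb0 : b = 0
    · have hqv := hq1v hb0
      by_cases hvx : v = x
      · exact ⟨v, Or.inl rfl, Or.inl hvx, hqv⟩
      by_cases hvy : v = y
      · exact ⟨v, Or.inl rfl, Or.inr hvy, hqv⟩
      rw [hqv] at hq2m
      exact absurd hq2m (hkey x y v hxy hvx hvy)
    by_cases ha0 : a = 0
    · have hqw := hq1w ha0
      by_cases hwx : w = x
      · exact ⟨w, Or.inr rfl, Or.inl hwx, hqw⟩
      by_cases hwy : w = y
      · exact ⟨w, Or.inr rfl, Or.inr hwy, hqw⟩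
      rw [hqw] at hq2m
      exact absurd hq2m (hkey x y w hxy hwx hwy)
    by_cases hb'0 : b' = 0
    · have hqx := hq2x hb'0
      by_cases hxv : x = v
      · exact ⟨x, Or.inl hxv, Or.inl rfl, hqx⟩
      by_cases hxw : x = w
      · exact ⟨x, Or.inr hxw, Or.inl rfl, hqx⟩
      rw [hqx] at hq1m
      exact absurd hq1m (hkey v w x hvw hxv hxw)
    by_cases ha'0 : a' = 0
    · have hqy := hq2y ha'0
      by_cases hyv : y = v
      · exact ⟨y, Or.inl hyv, Or.inr rfl, hqy⟩
      by_cases hyw : y = w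
      · exact ⟨y, Or.inr hyw, Or.inr rfl, hqy⟩
      rw [hqy] at hq1m
      exact absurd hq1m (hkey v w y hvw hyv hyw)
    have hapos : 0 < a := lt_of_le_of_ne ha (Ne.symm ha0)
    have hbpos : 0 < b := lt_of_le_of_ne hb (Ne.symm hb0)
    have ha'pos : 0 < a' := lt_of_le_of_ne ha' (Ne.symm ha'0)
    have hb'pos : 0 < b' := lt_of_le_of_ne hb' (Ne.symm hb'0)
    -- shared-endpoint cases
    by_cases hvx : v = x
    · exfalso
      subst hvx
      have hsurf := UDsurf (s := a - a') (t := b) (u := b') (X1 := (X v:ℝ))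
        (Z1 := (z v:ℝ)) (X2 := (X w:ℝ)) (Z2 := (z w:ℝ)) (X3 := (X y:ℝ))
        (Z3 := (z y:ℝ)) (by linarith) (by linear_combination hEx)
        (by linear_combination hEy) (by linear_combination hEz)
      rcases mul_eq_zero.mp hsurf with h1 | h2
      · rcases mul_eq_zero.mp h1 with h3 | h3
        · -- a = a', so b = b', so z w = z y, so w = y
          have haa : a = a' := by linarith
          have hbb : b = b' := by linarith
          have h4 : (z w:ℝ) = (z y:ℝ) := by
            rw [haa, hbb] at hEz
            have h6 : b' * ((z w:ℝ) - (z y:ℝ)) = 0 := by linear_combination hEz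
            rcases mul_eq_zero.mp h6 with h7 | h7
            · exact absurd h7 (ne_of_gt hb'pos)
            · linarith
          have h5 : z w = z y := by exact_mod_cast h4
          exact hnvwxy ⟨rfl, hzinj _ _ h5⟩
        · exact hb0 h3
      · rcases mul_eq_zero.mp h2 with h3 | h3
        · exact hXvwR (by linarith)
        · have : (z v:ℝ) = (z w:ℝ) := by linarith
          linarith
    by_cases hwy : w = y
    · exfalso
      subst hwy
      have hsurf := UDsurf (s := b - b') (t := a) (u := a') (X1 := (X w:ℝ))
        (Z1 := (z w:ℝ)) (X2 := (X v:ℝ)) (Z2 := (z v:ℝ)) (X3 := (X x:ℝ))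
        (Z3 := (z x:ℝ)) (by linarith) (by linear_combination hEx)
        (by linear_combination hEy) (by linear_combination hEz)
      rcases mul_eq_zero.mp hsurf with h1 | h2
      · rcases mul_eq_zero.mp h1 with h3 | h3
        · have hbb : b = b' := by linarith
          have haa : a = a' := by linarith
          have h4 : (z v:ℝ) = (z x:ℝ) := by
            rw [haa, hbb] at hEz
            have h6 : a' * ((z v:ℝ) - (z x:ℝ)) = 0 := by linear_combination hEz
            rcases mul_eq_zero.mp h6 with h7 | h7
            · exact absurd h7 (ne_of_gt ha'pos)
            · linarith
          have h5 : z v = z x := by exact_mod_cast h4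
          exact hnvwxy ⟨hzinj _ _ h5, rfl⟩
        · exact ha0 h3
      · rcases mul_eq_zero.mp h2 with h3 | h3
        · exact hXvwR (by linarith)
        · have : (z v:ℝ) = (z w:ℝ) := by linarith
          linarith
    by_cases hvy : v = y
    · exfalso
      subst hvy
      have f1 : b * (z v:ℝ) < b * (z w:ℝ) := by
        exact mul_lt_mul_of_pos_left hzvwR hbpos
      have f2 : a' * (z x:ℝ) < a' * (z v:ℝ) := by
        exact mul_lt_mul_of_pos_left hzxyR ha'pos
      have e1 : a * (z v:ℝ) + b * (z v:ℝ) = (z v:ℝ) := by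
        linear_combination (z v:ℝ) * hab
      have e2 : a' * (z v:ℝ) + b' * (z v:ℝ) = (z v:ℝ) := by
        linear_combination (z v:ℝ) * hab'
      linarith
    by_cases hwx : w = x
    · exfalso
      subst hwx
      have f1 : a * (z v:ℝ) < a * (z w:ℝ) := mul_lt_mul_of_pos_left hzvwR hapos
      have f2 : b' * (z w:ℝ) < b' * (z y:ℝ) := mul_lt_mul_of_pos_left hzxyR hb'pos
      have e1 : a * (z w:ℝ) + b * (z w:ℝ) = (z w:ℝ) := by
        linear_combination (z w:ℝ) * hab
      have e2 : a' * (z w:ℝ) + b' * (z w:ℝ) = (z w:ℝ) := by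
        linear_combination (z w:ℝ) * hab'
      linarith
    -- now the four vertices are pairwise distinct; determinant argument
    exfalso
    have hD : UDdet (X v) (X w) (X x) (X y) (z v) (z w) (z x) (z y) = 0 :=
      UDdet_zero _ _ _ _ _ _ _ _ hab hab' hEx hEy hEz
    unfold UDdet at hD
    by_cases hc1v : f v = f x
    · have hXE : X x = X v := by simp only [hX]; rw [← hc1v]
      rw [hXE] at hD
      have hfac : (z x - z v) * ((z w - z y) * ((X v - X w) * (X v - X y))) = 0 := by
        linear_combination hD
      simp only [mul_eq_zero, sub_eq_zero] at hfac
      rcases hfac with h | h | h | h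
      · exact hvx (hzinj x v h).symm
      · exact hwy (hzinj w y h)
      · exact hproper v w hvw (hXinj v w h)
      · exact hproper x y hxy (hc1v.symm.trans (hXinj v y h))
    by_cases hc2v : f w = f y
    · have hXF : X y = X w := by simp only [hX]; rw [← hc2v]
      rw [hXF] at hD
      have hfac : (z y - z w) * ((z v - z x) * ((X w - X v) * (X w - X x))) = 0 := by
        linear_combination hD
      simp only [mul_eq_zero, sub_eq_zero] at hfac
      rcases hfac with h | h | h | h
      · exact hwy (hzinj y w h).symm
      · exact hvx (hzinj v x h)
      · exact hproper v w hvw (hXinj w v h).symm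
      · exact hproper x y hxy ((hXinj w x h).symm.trans hc2v)
    by_cases hc3v : f v = f y
    · have hXF : X y = X v := by simp only [hX]; rw [← hc3v]
      rw [hXF] at hD
      have hfac : (z y - z v) * ((z x - z w) * ((X v - X w) * (X v - X x))) = 0 := by
        linear_combination hD
      simp only [mul_eq_zero, sub_eq_zero] at hfac
      rcases hfac with h | h | h | h
      · exact hvy (hzinj y v h).symm
      · exact hwx (hzinj x w h).symm
      · exact hproper v w hvw (hXinj v w h)
      · exact hc1v (hXinj v x h)
    by_cases hc4v : f w = f x
    · have hXE : X x = X w := by simp only [hX]; rw [← hc4v]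
      rw [hXE] at hD
      have hfac : (z x - z w) * ((z v - z y) * ((X v - X w) * (X w - X y))) = 0 := by
        linear_combination hD
      simp only [mul_eq_zero, sub_eq_zero] at hfac
      rcases hfac with h | h | h | h
      · exact hwx (hzinj x w h).symm
      · exact hvy (hzinj v y h)
      · exact hproper v w hvw (hXinj v w h)
      · exact hc2v (hXinj w y h)
    -- all four colours distinct: work modulo p
    have hDm := congrArg (fun t : ℤ => (t : ZMod p)) hD
    simp only [Int.cast_zero] at hDm
    have hres : ∀ u : V, ((z u : ℤ) : ZMod p) = ((X u : ℤ) : ZMod p)^2 := by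
      intro u
      have h1 : z u = (p:ℤ) * (k u : ℤ) + (X u ^ 2 % (p:ℤ)) := by rw [hzdef]
      rw [h1]
      push_cast
      simp [ZMod.natCast_self]
    push_cast at hDm
    rw [hres v, hres w, hres x, hres y] at hDm
    have hprod : (((X v:ℤ):ZMod p) - ((X w:ℤ):ZMod p))
        * ((((X v:ℤ):ZMod p) - ((X x:ℤ):ZMod p))
        * ((((X v:ℤ):ZMod p) - ((X y:ℤ):ZMod p))
        * ((((X w:ℤ):ZMod p) - ((X x:ℤ):ZMod p))
        * ((((X w:ℤ):ZMod p) - ((X y:ℤ):ZMod p))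
        * (((X x:ℤ):ZMod p) - ((X y:ℤ):ZMod p)))))) = 0 := by
      linear_combination -hDm
    have hco : ∀ u₁ u₂ : V, f u₁ ≠ f u₂ →
        ¬ (((X u₁:ℤ):ZMod p) = ((X u₂:ℤ):ZMod p)) := by
      intro u₁ u₂ hne h
      simp only [hX] at h
      push_cast at h
      rw [ZMod.natCast_eq_natCast_iff'] at h
      rw [Nat.mod_eq_of_lt (lt_of_lt_of_le (hfC u₁) hcp),
        Nat.mod_eq_of_lt (lt_of_lt_of_le (hfC u₂) hcp)] at h
      exact hne (Fin.ext h)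
    simp only [mul_eq_zero, sub_eq_zero] at hprod
    rcases hprod with h | h | h | h | h | h
    · exact hco v w (hproper v w hvw) h
    · exact hco v x hc1v h
    · exact hco v y hc3v h
    · exact hco w x (fun hh => hc4v hh) h
    · exact hco w y hc2v h
    · exact hco x y (hproper x y hxy) h
end
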